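/- arXiv:1303.5467 — 5 statements merged into one kernel-verified Lean document; each statement's English description precedes it below -/
import Mathlib

section
/- Let B be a Banach space, D a dense subspace of B which is itself a Banach space with norm ‖·‖_D ≥ ‖·‖_B, and let M be a bounded convex subset of the dual B* with sup_{μ∈M} ‖μ‖_{B*} ≤ K, closed in the norm topologies of both B* and D*. Suppose for each continuous curve ξ : [0,T] → M (in the D* norm, with ξ_0 = μ) we are given a backward propagator U^{t,s}[ξ] of bounded linear operators on B, generated by operators A[t,ξ] : D → B, satisfying: (i) ‖A[t,ξ] − A[t,η]‖_{D→B} ≤ c₁ sup_{t∈[0,T]} ‖ξ_t − η_t‖_{D*} and ‖A[t,ξ]‖_{D→B} ≤ c₁; (ii) ‖U^{t,s}[ξ]‖_{D→D} ≤ c₂ and ‖U^{t,s}[ξ]‖_{B→B} ≤ c₃; and the dual propagators preserve M. Then for any two curves ξ¹, ξ² in C_μ([0,T], M(D*)) and any t ∈ [0,T], ‖(Ũ^{t,0}[ξ¹] − Ũ^{t,0}[ξ²])μ‖_{D*} ≤ c₁ c₂ c₃ t K · sup_{s∈[0,T]} ‖ξ¹_s − ξ²_s‖_{D*}. -/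
set_option autoImplicit false

open MeasureTheory Set NormedSpace

noncomputable section

/-- The embedding of `B*` into `D*` induced by the inclusion `ι : D →L[ℝ] B`. -/
def embDual {B D : Type*} [NormedAddCommGroup B] [NormedSpace ℝ B]
    [NormedAddCommGroup D] [NormedSpace ℝ D] (ι : D →L[ℝ] B)
    (ν : StrongDual ℝ B) : StrongDual ℝ D := ν.comp ι

/-- Continuous curves `[0,T] → M ⊂ B*`, continuity in the `D*`-norm. -/
def AdmCurve {B D : Type*} [NormedAddCommGroup B] [NormedSpace ℝ B]
    [NormedAddCommGroup D] [NormedSpace ℝ D] (ι : D →L[ℝ] B)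
    (M : Set (StrongDual ℝ B)) (T : ℝ) (ξ : ℝ → StrongDual ℝ B) : Prop :=
  (∀ t ∈ Icc (0:ℝ) T, ξ t ∈ M) ∧
  ContinuousOn (fun t => embDual ι (ξ t)) (Icc (0:ℝ) T)

/-- the basic perturbation estimate for dual propagators:
`‖(Ũ^{t,0}[ξ¹] − Ũ^{t,0}[ξ²])μ‖_{D*} ≤ c₁c₂c₃ t K · sup_{s∈[0,T]} ‖ξ¹_s − ξ²_s‖_{D*}`. -/
theorem stmt0
    {B D : Type*} [NormedAddCommGroup B] [NormedSpace ℝ B] [CompleteSpace B]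
    [NormedAddCommGroup D] [NormedSpace ℝ D] [CompleteSpace D]
    (ι : D →L[ℝ] B) (hιdense : DenseRange ι) (hιnorm : ∀ f : D, ‖ι f‖ ≤ ‖f‖)
    (T K c₁ c₂ c₃ : ℝ) (hT : 0 < T) (hK : 0 < K)
    (hc₁ : 0 < c₁) (hc₂ : 0 < c₂) (hc₃ : 0 < c₃)
    (M : Set (StrongDual ℝ B)) (hMne : M.Nonempty) (hMconv : Convex ℝ M)
    (hMbdd : ∀ ν ∈ M, ‖ν‖ ≤ K) (hMclB : IsClosed M)
    (hMclD : IsClosed (embDual ι '' M))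
    (μ : StrongDual ℝ B) (hμ : μ ∈ M)
    (A : (ℝ → StrongDual ℝ B) → ℝ → (D →L[ℝ] B))
    (U : (ℝ → StrongDual ℝ B) → ℝ → ℝ → (B →L[ℝ] B))
    (UD : (ℝ → StrongDual ℝ B) → ℝ → ℝ → (D →L[ℝ] D))
    (hAbdd : ∀ ξ, AdmCurve ι M T ξ → ∀ t ∈ Icc (0:ℝ) T, ‖A ξ t‖ ≤ c₁)
    (hAlip : ∀ ξ η, AdmCurve ι M T ξ → AdmCurve ι M T η → ∀ t ∈ Icc (0:ℝ) T,
      ‖A ξ t - A η t‖ ≤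
        c₁ * ⨆ s : Icc (0:ℝ) T, ‖embDual ι (ξ (s:ℝ)) - embDual ι (η (s:ℝ))‖)
    (hUid : ∀ ξ t, U ξ t t = ContinuousLinearMap.id ℝ B)
    (hUchain : ∀ ξ t s r, t ≤ s → s ≤ r → (U ξ t s).comp (U ξ s r) = U ξ t r)
    (hUDcompat : ∀ ξ t s f, ι (UD ξ t s f) = U ξ t s (ι f))
    (hUbdd : ∀ ξ, AdmCurve ι M T ξ → ∀ t s, 0 ≤ t → t ≤ s → s ≤ T → ‖U ξ t s‖ ≤ c₃)
    (hUDbdd : ∀ ξ, AdmCurve ι M T ξ → ∀ t s, 0 ≤ t → t ≤ s → s ≤ T → ‖UD ξ t s‖ ≤ c₂)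
    (hUcont : ∀ ξ, AdmCurve ι M T ξ → ∀ v : B,
      ContinuousOn (fun q : ℝ × ℝ => U ξ q.1 q.2 v)
        {q : ℝ × ℝ | 0 ≤ q.1 ∧ q.1 ≤ q.2 ∧ q.2 ≤ T})
    (hgen₁ : ∀ ξ, AdmCurve ι M T ξ → ∀ (f : D) (t : ℝ), t ∈ Icc (0:ℝ) T →
      ∀ s ∈ Icc t T,
      HasDerivWithinAt (fun r => U ξ t r (ι f)) (U ξ t s (A ξ s f)) (Icc t T) s)
    (hgen₂ : ∀ ξ, AdmCurve ι M T ξ → ∀ (f : D) (r : ℝ), r ∈ Icc (0:ℝ) T →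
      ∀ s ∈ Icc (0:ℝ) r,
      HasDerivWithinAt (fun q => U ξ q r (ι f)) (-(A ξ s (UD ξ s r f)))
        (Icc (0:ℝ) r) s)
    (hpres : ∀ ξ, AdmCurve ι M T ξ → ∀ t s, 0 ≤ t → t ≤ s → s ≤ T →
      ∀ ν ∈ M, ν.comp (U ξ t s) ∈ M)
 :
    ∀ ξ₁ ξ₂, AdmCurve ι M T ξ₁ → AdmCurve ι M T ξ₂ → ξ₁ 0 = μ → ξ₂ 0 = μ →
    ∀ t ∈ Icc (0:ℝ) T,
    ‖embDual ι (μ.comp (U ξ₁ 0 t)) - embDual ι (μ.comp (U ξ₂ 0 t))‖ ≤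
      c₁ * c₂ * c₃ * t * K *
        ⨆ s : Icc (0:ℝ) T, ‖embDual ι (ξ₁ (s:ℝ)) - embDual ι (ξ₂ (s:ℝ))‖ := by
  intro ξ₁ ξ₂ h₁ h₂ hξ₁0 hξ₂0 t ht
  obtain ⟨ht0, htT⟩ := ht
  set S : ℝ := ⨆ s : Icc (0:ℝ) T, ‖embDual ι (ξ₁ (s:ℝ)) - embDual ι (ξ₂ (s:ℝ))‖ with hSdef
  have hS0 : 0 ≤ S := Real.iSup_nonneg fun s => norm_nonneg _
  -- the symmetric sup
  have hSsymm : (⨆ s : Icc (0:ℝ) T, ‖embDual ι (ξ₂ (s:ℝ)) - embDual ι (ξ₁ (s:ℝ))‖) = S := by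
    refine iSup_congr fun s => ?_
    exact norm_sub_rev _ _
  -- Key pointwise estimate
  have key : ∀ f : D, ‖μ (U ξ₁ 0 t (ι f)) - μ (U ξ₂ 0 t (ι f))‖ ≤
      (K * (c₁ * S) * (c₂ * ‖f‖)) * t := by
    intro f
    set x : ℝ → D := fun s => UD ξ₁ s t f with hxdef
    set v : ℝ → B := fun s => U ξ₁ s t (ι f) with hvdef
    have hxv : ∀ s, ι (x s) = v s := fun s => hUDcompat ξ₁ s t f
    set φ : ℝ → ℝ := fun s => μ (U ξ₂ 0 s (v s)) with hφdef
    set φ' : ℝ → ℝ := fun s => μ (U ξ₂ 0 s (A ξ₂ s (x s) - A ξ₁ s (x s))) with hφ'def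
    have hderiv : ∀ s ∈ Icc (0:ℝ) t, HasDerivWithinAt φ (φ' s) (Icc (0:ℝ) t) s := by
      intro s hs
      have hsT : s ∈ Icc (0:ℝ) T := ⟨hs.1, hs.2.trans htT⟩
      -- derivative of v
      have hv : HasDerivWithinAt v (-(A ξ₁ s (x s))) (Icc (0:ℝ) t) s :=
        hgen₂ ξ₁ h₁ f t ⟨ht0, htT⟩ s hs
      -- derivative of s' ↦ U ξ₂ 0 s' (v s)
      have hk : HasDerivWithinAt (fun s' => U ξ₂ 0 s' (v s)) (U ξ₂ 0 s (A ξ₂ s (x s)))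
          (Icc (0:ℝ) t) s := by
        have := (hgen₁ ξ₂ h₂ (x s) 0 ⟨le_rfl, hT.le⟩ s hsT).mono
          (Icc_subset_Icc le_rfl htT)
        simpa [hxv s] using this
      -- derivative of F s' = U ξ₂ 0 s' (v s' - v s)
      set w : B := -(A ξ₁ s (x s)) with hwdef
      have hF : HasDerivWithinAt (fun s' => U ξ₂ 0 s' (v s' - v s)) (U ξ₂ 0 s w)
          (Icc (0:ℝ) t) s := by
        rw [hasDerivWithinAt_iff_isLittleO]
        have hlittle := hasDerivWithinAt_iff_isLittleO.mp hv
        -- term1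
        have hterm1 : (fun s' => U ξ₂ 0 s' (v s' - v s - (s' - s) • w))
            =o[nhdsWithin s (Icc (0:ℝ) t)] fun s' => s' - s := by
          refine Asymptotics.IsBigO.trans_isLittleO ?_ hlittle
          rw [Asymptotics.isBigO_iff]
          refine ⟨c₃, ?_⟩
          filter_upwards [self_mem_nhdsWithin] with s' hs'
          calc ‖U ξ₂ 0 s' (v s' - v s - (s' - s) • w)‖
              ≤ ‖U ξ₂ 0 s'‖ * ‖v s' - v s - (s' - s) • w‖ :=
                ContinuousLinearMap.le_opNorm _ _
            _ ≤ c₃ * ‖v s' - v s - (s' - s) • w‖ := by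
                apply mul_le_mul_of_nonneg_right
                  (hUbdd ξ₂ h₂ 0 s' le_rfl hs'.1 (hs'.2.trans htT)) (norm_nonneg _)
        -- term2
        have hcont : Filter.Tendsto (fun s' => U ξ₂ 0 s' w - U ξ₂ 0 s w)
            (nhdsWithin s (Icc (0:ℝ) t)) (nhds 0) := by
          have hc : ContinuousWithinAt (fun s' : ℝ => U ξ₂ 0 s' w) (Icc (0:ℝ) t) s := by
            have hcw := (hUcont ξ₂ h₂ w) (0, s) ⟨le_rfl, hs.1, hs.2.trans htT⟩
            have hmap : MapsTo (fun s' : ℝ => ((0:ℝ), s')) (Icc (0:ℝ) t)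
                {q : ℝ × ℝ | 0 ≤ q.1 ∧ q.1 ≤ q.2 ∧ q.2 ≤ T} := by
              intro s' hs'
              exact ⟨le_rfl, hs'.1, hs'.2.trans htT⟩
            exact hcw.comp (Continuous.continuousWithinAt (continuous_const.prodMk continuous_id)) hmap
          have hc2 : ContinuousWithinAt (fun s' : ℝ => U ξ₂ 0 s' w - U ξ₂ 0 s w)
              (Icc (0:ℝ) t) s := hc.sub continuousWithinAt_const
          simpa [ContinuousWithinAt] using hc2
        have hterm2 : (fun s' => (s' - s) • (U ξ₂ 0 s' w - U ξ₂ 0 s w))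
            =o[nhdsWithin s (Icc (0:ℝ) t)] fun s' => s' - s := by
          rw [Asymptotics.isLittleO_iff]
          intro ε hε
          filter_upwards [Metric.tendsto_nhds.mp hcont ε hε] with s' hd
          rw [norm_smul]
          rw [dist_zero_right] at hd
          calc ‖s' - s‖ * ‖U ξ₂ 0 s' w - U ξ₂ 0 s w‖ ≤ ‖s' - s‖ * ε :=
              mul_le_mul_of_nonneg_left hd.le (norm_nonneg _)
            _ = ε * ‖s' - s‖ := mul_comm _ _
        have := hterm1.add hterm2
        refine this.congr (fun s' => ?_) (fun _ => rfl)
        simp only [map_sub, _root_.map_smul, smul_sub, sub_self, map_zero]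
        abel
      have hsum := hF.add hk
      have hfun : ∀ s' : ℝ, U ξ₂ 0 s' (v s' - v s) + U ξ₂ 0 s' (v s) = U ξ₂ 0 s' (v s') := by
        intro s'; rw [← map_add, sub_add_cancel]
      have hg : HasDerivWithinAt (fun s' => U ξ₂ 0 s' (v s'))
          (U ξ₂ 0 s (A ξ₂ s (x s) - A ξ₁ s (x s))) (Icc (0:ℝ) t) s := by
        have heq : U ξ₂ 0 s w + U ξ₂ 0 s (A ξ₂ s (x s)) =
            U ξ₂ 0 s (A ξ₂ s (x s) - A ξ₁ s (x s)) := by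
          rw [hwdef, ← map_add]
          congr 1
          abel
        rw [← heq]
        exact hsum.congr (fun s' _ => (hfun s').symm) (hfun s).symm
      exact HasFDerivAt.comp_hasDerivWithinAt s (μ.hasFDerivAt) hg
    -- bound on the derivative
    have hbound : ∀ s ∈ Icc (0:ℝ) t, ‖φ' s‖ ≤ K * (c₁ * S) * (c₂ * ‖f‖) := by
      intro s hs
      have hsT : s ∈ Icc (0:ℝ) T := ⟨hs.1, hs.2.trans htT⟩
      have hμU : μ.comp (U ξ₂ 0 s) ∈ M :=
        hpres ξ₂ h₂ 0 s le_rfl hs.1 hsT.2 μ hμ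
      have h1 : ‖φ' s‖ ≤ K * ‖A ξ₂ s (x s) - A ξ₁ s (x s)‖ := by
        have : φ' s = (μ.comp (U ξ₂ 0 s)) (A ξ₂ s (x s) - A ξ₁ s (x s)) := rfl
        rw [this]
        calc ‖(μ.comp (U ξ₂ 0 s)) (A ξ₂ s (x s) - A ξ₁ s (x s))‖
            ≤ ‖μ.comp (U ξ₂ 0 s)‖ * ‖A ξ₂ s (x s) - A ξ₁ s (x s)‖ :=
              ContinuousLinearMap.le_opNorm _ _
          _ ≤ K * ‖A ξ₂ s (x s) - A ξ₁ s (x s)‖ :=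
              mul_le_mul_of_nonneg_right (hMbdd _ hμU) (norm_nonneg _)
      have h2 : ‖A ξ₂ s (x s) - A ξ₁ s (x s)‖ ≤ (c₁ * S) * (c₂ * ‖f‖) := by
        have hx : ‖x s‖ ≤ c₂ * ‖f‖ := by
          calc ‖UD ξ₁ s t f‖ ≤ ‖UD ξ₁ s t‖ * ‖f‖ := ContinuousLinearMap.le_opNorm _ _
            _ ≤ c₂ * ‖f‖ := mul_le_mul_of_nonneg_right
                (hUDbdd ξ₁ h₁ s t hs.1 hs.2 htT) (norm_nonneg _)
        have hA : ‖A ξ₂ s - A ξ₁ s‖ ≤ c₁ * S := by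
          have := hAlip ξ₂ ξ₁ h₂ h₁ s hsT
          rwa [hSsymm] at this
        calc ‖A ξ₂ s (x s) - A ξ₁ s (x s)‖ = ‖(A ξ₂ s - A ξ₁ s) (x s)‖ := by
              simp [ContinuousLinearMap.sub_apply]
          _ ≤ ‖A ξ₂ s - A ξ₁ s‖ * ‖x s‖ := ContinuousLinearMap.le_opNorm _ _
          _ ≤ (c₁ * S) * (c₂ * ‖f‖) := by
              apply mul_le_mul hA hx (norm_nonneg _)
              positivity
      calc ‖φ' s‖ ≤ K * ‖A ξ₂ s (x s) - A ξ₁ s (x s)‖ := h1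
        _ ≤ K * ((c₁ * S) * (c₂ * ‖f‖)) :=
            mul_le_mul_of_nonneg_left h2 hK.le
        _ = K * (c₁ * S) * (c₂ * ‖f‖) := by ring
    have hmvt := Convex.norm_image_sub_le_of_norm_hasDerivWithin_le hderiv hbound
      (convex_Icc 0 t) (left_mem_Icc.mpr ht0) (right_mem_Icc.mpr ht0)
    have hφt : φ t = μ (U ξ₂ 0 t (ι f)) := by
      simp only [hφdef, hvdef, hUid ξ₁ t]
      rfl
    have hφ0 : φ 0 = μ (U ξ₁ 0 t (ι f)) := by
      simp only [hφdef, hvdef, hUid ξ₂ 0]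
      rfl
    rw [hφt, hφ0] at hmvt
    have : ‖μ (U ξ₁ 0 t (ι f)) - μ (U ξ₂ 0 t (ι f))‖ =
        ‖μ (U ξ₂ 0 t (ι f)) - μ (U ξ₁ 0 t (ι f))‖ := norm_sub_rev _ _
    rw [this]
    calc ‖μ (U ξ₂ 0 t (ι f)) - μ (U ξ₁ 0 t (ι f))‖
        ≤ K * (c₁ * S) * (c₂ * ‖f‖) * ‖t - 0‖ := hmvt
      _ = K * (c₁ * S) * (c₂ * ‖f‖) * t := by
          rw [sub_zero, Real.norm_of_nonneg ht0]
  -- assemble: operator norm bound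
  have hop : ‖embDual ι (μ.comp (U ξ₁ 0 t)) - embDual ι (μ.comp (U ξ₂ 0 t))‖ ≤
      c₁ * c₂ * t * K * S := by
    apply ContinuousLinearMap.opNorm_le_bound
    · positivity
    · intro f
      have := key f
      calc ‖(embDual ι (μ.comp (U ξ₁ 0 t)) - embDual ι (μ.comp (U ξ₂ 0 t))) f‖
          = ‖μ (U ξ₁ 0 t (ι f)) - μ (U ξ₂ 0 t (ι f))‖ := rfl
        _ ≤ K * (c₁ * S) * (c₂ * ‖f‖) * t := this
        _ = c₁ * c₂ * t * K * S * ‖f‖ := by ring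
  by_cases hns : Nontrivial B
  · have hc₃1 : 1 ≤ c₃ := by
      have hadm : AdmCurve ι M T (fun _ => μ) := ⟨fun _ _ => hμ, continuousOn_const⟩
      have := hUbdd (fun _ => μ) hadm 0 0 le_rfl le_rfl hT.le
      rw [hUid] at this
      rwa [ContinuousLinearMap.norm_id] at this
    calc ‖embDual ι (μ.comp (U ξ₁ 0 t)) - embDual ι (μ.comp (U ξ₂ 0 t))‖
        ≤ c₁ * c₂ * t * K * S := hop
      _ ≤ c₁ * c₂ * c₃ * t * K * S := by nlinarith [mul_nonneg (mul_nonneg (mul_nonneg (mul_nonneg hc₁.le hc₂.le) ht0) hK.le) hS0]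
  · have hsub : Subsingleton B := not_nontrivial_iff_subsingleton.mp hns
    have hz : ∀ ν : StrongDual ℝ B, embDual ι ν = 0 := by
      intro ν
      ext f
      have : ι f = 0 := Subsingleton.elim _ _
      simp [embDual, this]
    rw [hz, hz, sub_zero, norm_zero]
    positivity
end
end

section
/- Under the assumptions of the local well-posedness setup (bounded convex M ⊂ B* with bound K, Lipschitz constant c₁ for the generators, propagator bounds c₂ on D and c₃ on B, dual propagators preserving M), if additionally c₁ c₂ c₃ K T < 1, then the map Φ : C_μ([0,T], M(D*)) → C_μ([0,T], M(D*)) sending a curve ξ to the curve t ↦ Ũ^{t,0}[ξ]μ is a contraction with contraction constant c₁ c₂ c₃ K T < 1, and hence has a unique fixed point; this fixed point is the unique solution of the path-dependent kinetic equation (d/dt)(f, μ_t) = (A[t, {μ_·}]f, μ_t), μ_0 = μ, for all f ∈ D. -/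
set_option autoImplicit false

open MeasureTheory Set NormedSpace

noncomputable section

open Filter Asymptotics Topology

set_option maxHeartbeats 1000000
set_option linter.unusedVariables false

lemma embDual_apply {B D : Type*} [NormedAddCommGroup B] [NormedSpace ℝ B]
    [NormedAddCommGroup D] [NormedSpace ℝ D] (ι : D →L[ℝ] B)
    (ν : StrongDual ℝ B) (f : D) : embDual ι ν f = ν (ι f) := rfl

lemma embDual_sub {B D : Type*} [NormedAddCommGroup B] [NormedSpace ℝ B]
    [NormedAddCommGroup D] [NormedSpace ℝ D] (ι : D →L[ℝ] B)
    (ν₁ ν₂ : StrongDual ℝ B) : embDual ι (ν₁ - ν₂) = embDual ι ν₁ - embDual ι ν₂ := by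
  ext f; simp [embDual]

lemma embDual_inj {B D : Type*} [NormedAddCommGroup B] [NormedSpace ℝ B]
    [NormedAddCommGroup D] [NormedSpace ℝ D] {ι : D →L[ℝ] B}
    (hιdense : DenseRange ι) {ν₁ ν₂ : StrongDual ℝ B}
    (h : embDual ι ν₁ = embDual ι ν₂) : ν₁ = ν₂ := by
  have hco : (ν₁ : B → ℝ) = (ν₂ : B → ℝ) :=
    hιdense.equalizer ν₁.continuous ν₂.continuous
      (funext fun f => congrArg (fun (ρ : StrongDual ℝ D) => ρ f) h)
  ext x
  exact congrFun hco x

lemma embDual_norm_le {B D : Type*} [NormedAddCommGroup B] [NormedSpace ℝ B]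
    [NormedAddCommGroup D] [NormedSpace ℝ D] (ι : D →L[ℝ] B)
    (hιnorm : ∀ f : D, ‖ι f‖ ≤ ‖f‖) (ν : StrongDual ℝ B) : ‖embDual ι ν‖ ≤ ‖ν‖ := by
  refine ContinuousLinearMap.opNorm_le_bound _ (norm_nonneg ν) fun f => ?_
  calc ‖embDual ι ν f‖ ≤ ‖ν‖ * ‖ι f‖ := ν.le_opNorm (ι f)
    _ ≤ ‖ν‖ * ‖f‖ := mul_le_mul_of_nonneg_left (hιnorm f) (norm_nonneg ν)

/-- Product rule for `s ↦ Λ s (w s)` under strong continuity assumptions. -/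
lemma prodRule {B E : Type*} [NormedAddCommGroup B] [NormedSpace ℝ B]
    [NormedAddCommGroup E] [NormedSpace ℝ E]
    (Λ : ℝ → (B →L[ℝ] E)) (w : ℝ → B) (S : Set ℝ) (s : ℝ) (w₁ : B) (d₁ : E) (C : ℝ)
    (hC : ∀ᶠ r in 𝓝[S] s, ‖Λ r‖ ≤ C)
    (h1 : HasDerivWithinAt (fun r => Λ r (w s)) d₁ S s)
    (h2 : HasDerivWithinAt w w₁ S s)
    (h3 : Tendsto (fun r => Λ r w₁) (𝓝[S] s) (𝓝 (Λ s w₁))) :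
    HasDerivWithinAt (fun r => Λ r (w r)) (d₁ + Λ s w₁) S s := by
  have h2c : HasDerivWithinAt (fun r => Λ s (w r)) (Λ s w₁) S s :=
    (Λ s).hasFDerivAt.comp_hasDerivWithinAt s h2
  rw [hasDerivWithinAt_iff_isLittleO] at h1 h2c ⊢
  have h2o := hasDerivWithinAt_iff_isLittleO.1 h2
  set e : ℝ → B := fun r => w r - w s - (r - s) • w₁ with he
  have hB1 : (fun r => (r - s) • ((Λ r) w₁ - (Λ s) w₁)) =o[𝓝[S] s] fun r => r - s := by
    rw [Asymptotics.isLittleO_iff]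
    intro c hc
    have htz : Tendsto (fun r => Λ r w₁ - Λ s w₁) (𝓝[S] s) (𝓝 0) := by
      simpa using h3.sub_const (Λ s w₁)
    filter_upwards [NormedAddCommGroup.tendsto_nhds_zero.1 htz c hc] with r hr
    rw [norm_smul]
    calc ‖r - s‖ * ‖Λ r w₁ - Λ s w₁‖ ≤ ‖r - s‖ * c :=
          mul_le_mul_of_nonneg_left hr.le (norm_nonneg _)
      _ = c * ‖r - s‖ := mul_comm _ _
  have hB2 : (fun r => (Λ r) (e r) - (Λ s) (e r)) =o[𝓝[S] s] fun r => r - s := by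
    have hbig : (fun r => (Λ r) (e r) - (Λ s) (e r)) =O[𝓝[S] s] e := by
      rw [Asymptotics.isBigO_iff]
      refine ⟨C + ‖Λ s‖, ?_⟩
      filter_upwards [hC] with r hr
      calc ‖Λ r (e r) - Λ s (e r)‖ ≤ ‖Λ r (e r)‖ + ‖Λ s (e r)‖ := norm_sub_le _ _
        _ ≤ ‖Λ r‖ * ‖e r‖ + ‖Λ s‖ * ‖e r‖ :=
            add_le_add ((Λ r).le_opNorm _) ((Λ s).le_opNorm _)
        _ ≤ C * ‖e r‖ + ‖Λ s‖ * ‖e r‖ := by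
            have := norm_nonneg (e r); nlinarith
        _ = (C + ‖Λ s‖) * ‖e r‖ := by ring
    exact hbig.trans_isLittleO h2o
  have hA3 : (fun r => (Λ r) (w r - w s) - (Λ s) (w r - w s)) =o[𝓝[S] s] fun r => r - s := by
    refine (hB1.add hB2).congr' (Eventually.of_forall fun r => ?_) EventuallyEq.rfl
    simp only [he, map_sub, ContinuousLinearMap.map_smul, smul_sub]
    abel
  have := (h1.add h2c).add hA3
  refine this.congr' (Eventually.of_forall fun r => ?_) EventuallyEq.rfl
  simp only [map_sub, smul_add]
  abel

/-- Weak convergence from `D*`-convergence, boundedness, and density of the range of `ι`. -/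
lemma weak_tendsto {B D : Type*} [NormedAddCommGroup B] [NormedSpace ℝ B]
    [NormedAddCommGroup D] [NormedSpace ℝ D] {ι : D →L[ℝ] B}
    (hιdense : DenseRange ι) {K : ℝ} (L : Filter ℝ) (ξ : ℝ → StrongDual ℝ B) (s : ℝ)
    (hbdd : ∀ᶠ r in L, ‖ξ r‖ ≤ K) (hKs : ‖ξ s‖ ≤ K)
    (hconv : Tendsto (fun r => embDual ι (ξ r)) L (𝓝 (embDual ι (ξ s)))) (v : B) :
    Tendsto (fun r => ξ r v) L (𝓝 (ξ s v)) := by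
  rw [Metric.tendsto_nhds]
  intro ε hε
  have hK0 : 0 ≤ K := le_trans (norm_nonneg _) hKs
  obtain ⟨g, hg⟩ := hιdense.exists_dist_lt v (show 0 < ε/(4*(K+1)) by positivity)
  have hgv : ‖v - ι g‖ < ε/(4*(K+1)) := by rwa [dist_eq_norm] at hg
  have hKp : (0:ℝ) < K + 1 := by linarith
  have hGp : (0:ℝ) < ‖g‖ + 1 := by positivity
  have hf2 : K * (ε/(4*(K+1))) ≤ ε/4 := by
    have h1 : K * (ε/(4*(K+1))) ≤ (K+1) * (ε/(4*(K+1))) := by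
      have : (0:ℝ) ≤ ε/(4*(K+1)) := by positivity
      nlinarith
    have h2 : (K+1) * (ε/(4*(K+1))) = ε/4 := by field_simp
    linarith
  have hmid := Metric.tendsto_nhds.1 hconv (ε/(4*(‖g‖+1))) (by positivity)
  filter_upwards [hbdd, hmid] with r hr hd
  have hdd : ‖embDual ι (ξ r) - embDual ι (ξ s)‖ < ε/(4*(‖g‖+1)) := by
    rwa [dist_eq_norm] at hd
  have hdec : ξ r v - ξ s v
      = ξ r (v - ι g) + ((embDual ι (ξ r) - embDual ι (ξ s)) g) + ξ s (ι g - v) := by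
    simp only [embDual_apply, ContinuousLinearMap.sub_apply, map_sub]
    ring
  have e1 : ‖ξ r v - ξ s v‖ ≤ K*‖v - ι g‖
      + ‖embDual ι (ξ r) - embDual ι (ξ s)‖*‖g‖ + K*‖v - ι g‖ := by
    rw [hdec]
    refine (norm_add₃_le).trans ?_
    have b1 : ‖ξ r (v - ι g)‖ ≤ K * ‖v - ι g‖ := (ξ r).le_of_opNorm_le hr _
    have b2 : ‖(embDual ι (ξ r) - embDual ι (ξ s)) g‖
        ≤ ‖embDual ι (ξ r) - embDual ι (ξ s)‖ * ‖g‖ := ContinuousLinearMap.le_opNorm _ _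
    have b3 : ‖ξ s (ι g - v)‖ ≤ K * ‖v - ι g‖ := by
      have := (ξ s).le_of_opNorm_le hKs (ι g - v)
      rwa [norm_sub_rev] at this
    linarith
  have f1 : K * ‖v - ι g‖ ≤ ε/4 := by
    have := mul_le_mul_of_nonneg_left hgv.le hK0
    linarith
  have f3 : ‖embDual ι (ξ r) - embDual ι (ξ s)‖ * ‖g‖ ≤ ε/4 := by
    have hb : ‖embDual ι (ξ r) - embDual ι (ξ s)‖ * ‖g‖
        ≤ (ε/(4*(‖g‖+1))) * (‖g‖+1) := by
      have := norm_nonneg g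
      have := norm_nonneg (embDual ι (ξ r) - embDual ι (ξ s))
      nlinarith
    have : (ε/(4*(‖g‖+1))) * (‖g‖+1) = ε/4 := by field_simp
    linarith
  rw [dist_eq_norm]
  calc ‖ξ r v - ξ s v‖ ≤ ε/4 + ε/4 + ε/4 := by linarith
    _ < ε := by linarith

/-- The key quantitative estimate for the difference of two dual propagators. -/
lemma contractionEst {B D : Type*} [NormedAddCommGroup B] [NormedSpace ℝ B]
    [NormedAddCommGroup D] [NormedSpace ℝ D]
    (ι : D →L[ℝ] B) (hιnorm : ∀ f : D, ‖ι f‖ ≤ ‖f‖)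
    (T K c₁ c₂ c₃ : ℝ) (hT : 0 ≤ T) (hK : 0 ≤ K) (hc₁ : 0 ≤ c₁) (hc₂ : 0 ≤ c₂) (hc₃ : 0 ≤ c₃)
    (μ : StrongDual ℝ B) (hμK : ‖μ‖ ≤ K)
    (A : (ℝ → StrongDual ℝ B) → ℝ → (D →L[ℝ] B))
    (U : (ℝ → StrongDual ℝ B) → ℝ → ℝ → (B →L[ℝ] B))
    (UD : (ℝ → StrongDual ℝ B) → ℝ → ℝ → (D →L[ℝ] D))
    (hUid : ∀ ξ t, U ξ t t = ContinuousLinearMap.id ℝ B)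
    (hUDcompat : ∀ ξ t s f, ι (UD ξ t s f) = U ξ t s (ι f))
    (ξ₁ ξ₂ : ℝ → StrongDual ℝ B)
    (hUbdd₁ : ∀ t s, 0 ≤ t → t ≤ s → s ≤ T → ‖U ξ₁ t s‖ ≤ c₃)
    (hUDbdd₂ : ∀ t s, 0 ≤ t → t ≤ s → s ≤ T → ‖UD ξ₂ t s‖ ≤ c₂)
    (hUcont₁ : ∀ v : B, ContinuousOn (fun q : ℝ × ℝ => U ξ₁ q.1 q.2 v)
      {q : ℝ × ℝ | 0 ≤ q.1 ∧ q.1 ≤ q.2 ∧ q.2 ≤ T})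
    (hgen₁' : ∀ (f : D) (t : ℝ), t ∈ Icc (0:ℝ) T → ∀ s ∈ Icc t T,
      HasDerivWithinAt (fun r => U ξ₁ t r (ι f)) (U ξ₁ t s (A ξ₁ s f)) (Icc t T) s)
    (hgen₂' : ∀ (f : D) (r : ℝ), r ∈ Icc (0:ℝ) T → ∀ s ∈ Icc (0:ℝ) r,
      HasDerivWithinAt (fun q => U ξ₂ q r (ι f)) (-(A ξ₂ s (UD ξ₂ s r f))) (Icc (0:ℝ) r) s)
    (Δ : ℝ) (hΔ0 : 0 ≤ Δ)
    (hAlipΔ : ∀ s ∈ Icc (0:ℝ) T, ‖A ξ₁ s - A ξ₂ s‖ ≤ c₁ * Δ)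
    (t : ℝ) (ht : t ∈ Icc (0:ℝ) T) :
    ‖embDual ι (μ.comp (U ξ₁ 0 t)) - embDual ι (μ.comp (U ξ₂ 0 t))‖
      ≤ (c₁*c₂*c₃*K*t) * Δ := by
  have hsub : Icc (0:ℝ) t ⊆ Icc 0 T := Icc_subset_Icc le_rfl ht.2
  have key : ∀ f : D, ‖U ξ₁ 0 t (ι f) - U ξ₂ 0 t (ι f)‖ ≤ (c₁*c₂*c₃*Δ*‖f‖) * t := by
    intro f
    set ψ : ℝ → B := fun s => U ξ₁ 0 s (U ξ₂ s t (ι f)) with hψ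
    have hder : ∀ s ∈ Icc (0:ℝ) t, HasDerivWithinAt ψ
        (U ξ₁ 0 s ((A ξ₁ s) (UD ξ₂ s t f))
          + (U ξ₁ 0 s) (-((A ξ₂ s) (UD ξ₂ s t f)))) (Icc 0 t) s := by
      intro s hs
      have hsT : s ∈ Icc (0:ℝ) T := hsub hs
      apply prodRule (Λ := fun r => U ξ₁ 0 r) (w := fun r => U ξ₂ r t (ι f)) (C := c₃)
      · filter_upwards [eventually_mem_nhdsWithin] with r hr
        exact hUbdd₁ 0 r le_rfl hr.1 (hr.2.trans ht.2)
      · have h := hgen₁' (UD ξ₂ s t f) 0 ⟨le_rfl, hT⟩ s ⟨hsT.1, hsT.2⟩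
        rw [hUDcompat ξ₂ s t f] at h
        exact h.mono hsub
      · exact hgen₂' f t ht s hs
      · have hmaps : MapsTo (fun r : ℝ => ((0:ℝ), r)) (Icc (0:ℝ) t)
            {q : ℝ × ℝ | 0 ≤ q.1 ∧ q.1 ≤ q.2 ∧ q.2 ≤ T} :=
          fun r hr => ⟨le_rfl, hr.1, hr.2.trans ht.2⟩
        have hcont := (hUcont₁ (-((A ξ₂ s) (UD ξ₂ s t f)))).comp
          ((continuous_const.prodMk continuous_id).continuousOn) hmaps
        exact hcont s hs
    have hbnd : ∀ s ∈ Icc (0:ℝ) t,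
        ‖U ξ₁ 0 s ((A ξ₁ s) (UD ξ₂ s t f))
          + (U ξ₁ 0 s) (-((A ξ₂ s) (UD ξ₂ s t f)))‖ ≤ c₁*c₂*c₃*Δ*‖f‖ := by
      intro s hs
      have hsT := hsub hs
      have h1 : U ξ₁ 0 s ((A ξ₁ s) (UD ξ₂ s t f)) + (U ξ₁ 0 s) (-((A ξ₂ s) (UD ξ₂ s t f)))
          = U ξ₁ 0 s ((A ξ₁ s - A ξ₂ s) (UD ξ₂ s t f)) := by
        rw [← map_add]
        congr 1
        simp [ContinuousLinearMap.sub_apply, sub_eq_add_neg]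
      rw [h1]
      have b1 : ‖U ξ₁ 0 s ((A ξ₁ s - A ξ₂ s) (UD ξ₂ s t f))‖
          ≤ c₃ * ‖(A ξ₁ s - A ξ₂ s) (UD ξ₂ s t f)‖ :=
        (U ξ₁ 0 s).le_of_opNorm_le (hUbdd₁ 0 s le_rfl hsT.1 hsT.2) _
      have b2 : ‖(A ξ₁ s - A ξ₂ s) (UD ξ₂ s t f)‖ ≤ (c₁*Δ) * ‖UD ξ₂ s t f‖ :=
        (A ξ₁ s - A ξ₂ s).le_of_opNorm_le (hAlipΔ s hsT) _
      have b3 : ‖UD ξ₂ s t f‖ ≤ c₂ * ‖f‖ :=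
        (UD ξ₂ s t).le_of_opNorm_le (hUDbdd₂ s t hs.1 hs.2 ht.2) _
      have hnn : (0:ℝ) ≤ c₃ := hc₃
      calc ‖U ξ₁ 0 s ((A ξ₁ s - A ξ₂ s) (UD ξ₂ s t f))‖
          ≤ c₃ * ((c₁*Δ) * ‖UD ξ₂ s t f‖) := by
            refine b1.trans ?_
            exact mul_le_mul_of_nonneg_left b2 hnn
        _ ≤ c₃ * ((c₁*Δ) * (c₂ * ‖f‖)) := by
            have : (0:ℝ) ≤ c₁*Δ := by positivity
            have h := mul_le_mul_of_nonneg_left b3 this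
            exact mul_le_mul_of_nonneg_left h hnn
        _ = c₁*c₂*c₃*Δ*‖f‖ := by ring
    have hmvt := Convex.norm_image_sub_le_of_norm_hasDerivWithin_le hder hbnd
      (convex_Icc 0 t) ⟨le_rfl, ht.1⟩ ⟨ht.1, le_rfl⟩
    have hψt : ψ t = U ξ₁ 0 t (ι f) := by simp [hψ, hUid ξ₂ t]
    have hψ0 : ψ 0 = U ξ₂ 0 t (ι f) := by simp [hψ, hUid ξ₁ 0]
    have : ‖t - 0‖ = t := by
      rw [sub_zero, Real.norm_eq_abs, abs_of_nonneg ht.1]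
    calc ‖U ξ₁ 0 t (ι f) - U ξ₂ 0 t (ι f)‖ = ‖ψ t - ψ 0‖ := by rw [hψt, hψ0]
      _ ≤ (c₁*c₂*c₃*Δ*‖f‖) * ‖t - 0‖ := hmvt
      _ = (c₁*c₂*c₃*Δ*‖f‖) * t := by rw [this]
  rw [← embDual_sub]
  refine ContinuousLinearMap.opNorm_le_bound _
    (mul_nonneg (mul_nonneg (mul_nonneg (mul_nonneg (mul_nonneg hc₁ hc₂) hc₃) hK) ht.1) hΔ0)
    fun f => ?_
  have hval : (embDual ι (μ.comp (U ξ₁ 0 t) - μ.comp (U ξ₂ 0 t))) f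
      = μ (U ξ₁ 0 t (ι f) - U ξ₂ 0 t (ι f)) := by
    simp [embDual_apply, ContinuousLinearMap.sub_apply, map_sub]
  rw [hval]
  calc ‖μ (U ξ₁ 0 t (ι f) - U ξ₂ 0 t (ι f))‖
      ≤ K * ‖U ξ₁ 0 t (ι f) - U ξ₂ 0 t (ι f)‖ := μ.le_of_opNorm_le hμK _
    _ ≤ K * ((c₁*c₂*c₃*Δ*‖f‖) * t) := by
        have := key f
        have hKnn : (0:ℝ) ≤ K := hK
        exact mul_le_mul_of_nonneg_left this hKnn
    _ = (c₁*c₂*c₃*K*t) * Δ * ‖f‖ := by ring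

/-- Lipschitz-in-time estimate for the dual propagator curve. -/
lemma timeEst {B D : Type*} [NormedAddCommGroup B] [NormedSpace ℝ B]
    [NormedAddCommGroup D] [NormedSpace ℝ D]
    (ι : D →L[ℝ] B) (T K c₁ c₃ : ℝ) (hK : 0 ≤ K) (hc₁ : 0 ≤ c₁) (hc₃ : 0 ≤ c₃)
    (μ : StrongDual ℝ B) (hμK : ‖μ‖ ≤ K)
    (A : ℝ → (D →L[ℝ] B)) (U : ℝ → ℝ → (B →L[ℝ] B))
    (hUid : ∀ t, U t t = ContinuousLinearMap.id ℝ B)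
    (hUchain : ∀ t s r, t ≤ s → s ≤ r → (U t s).comp (U s r) = U t r)
    (hAb : ∀ s ∈ Icc (0:ℝ) T, ‖A s‖ ≤ c₁)
    (hUb : ∀ t s, 0 ≤ t → t ≤ s → s ≤ T → ‖U t s‖ ≤ c₃)
    (hg₁ : ∀ (f : D) (t : ℝ), t ∈ Icc (0:ℝ) T → ∀ s ∈ Icc t T,
      HasDerivWithinAt (fun r => U t r (ι f)) (U t s (A s f)) (Icc t T) s)
    (t t' : ℝ) (ht : t ∈ Icc (0:ℝ) T) (ht' : t' ∈ Icc (0:ℝ) T) (htt' : t ≤ t') :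
    ‖embDual ι (μ.comp (U 0 t')) - embDual ι (μ.comp (U 0 t))‖
      ≤ (K*c₁*c₃*c₃) * (t' - t) := by
  rw [← embDual_sub]
  have hnn : (0:ℝ) ≤ (K*c₁*c₃*c₃) * (t' - t) := by
    have : (0:ℝ) ≤ t' - t := by linarith
    positivity
  refine ContinuousLinearMap.opNorm_le_bound _ hnn fun f => ?_
  have hch : U 0 t' (ι f) = U 0 t (U t t' (ι f)) := by
    rw [← hUchain 0 t t' ht.1 htt']; rfl
  have hval : (embDual ι (μ.comp (U 0 t') - μ.comp (U 0 t))) f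
      = μ (U 0 t (U t t' (ι f) - ι f)) := by
    simp only [embDual_apply, ContinuousLinearMap.sub_apply, ContinuousLinearMap.comp_apply]
    rw [hch, ← map_sub, ← map_sub]
  rw [hval]
  have hder : ∀ s ∈ Icc t T, HasDerivWithinAt (fun r => U t r (ι f)) (U t s (A s f)) (Icc t T) s :=
    hg₁ f t ht
  have hbnd : ∀ s ∈ Icc t T, ‖U t s (A s f)‖ ≤ c₃ * (c₁ * ‖f‖) := by
    intro s hs
    have b1 : ‖U t s (A s f)‖ ≤ c₃ * ‖A s f‖ :=
      (U t s).le_of_opNorm_le (hUb t s ht.1 hs.1 hs.2) _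
    have b2 : ‖A s f‖ ≤ c₁ * ‖f‖ :=
      (A s).le_of_opNorm_le (hAb s ⟨ht.1.trans hs.1, hs.2⟩) _
    exact b1.trans (mul_le_mul_of_nonneg_left b2 hc₃)
  have hmvt := Convex.norm_image_sub_le_of_norm_hasDerivWithin_le hder hbnd
    (convex_Icc t T) ⟨le_rfl, ht.2⟩ ⟨htt', ht'.2⟩
  have hUtt : U t t (ι f) = ι f := by rw [hUid]; rfl
  have hn : ‖t' - t‖ = t' - t := by
    rw [Real.norm_eq_abs, abs_of_nonneg (by linarith)]
  have hdiff : ‖U t t' (ι f) - ι f‖ ≤ (c₃ * (c₁ * ‖f‖)) * (t' - t) := by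
    have := hmvt
    rw [hUtt, hn] at this
    exact this
  calc ‖μ (U 0 t (U t t' (ι f) - ι f))‖
      ≤ K * ‖U 0 t (U t t' (ι f) - ι f)‖ := μ.le_of_opNorm_le hμK _
    _ ≤ K * (c₃ * ‖U t t' (ι f) - ι f‖) := by
        refine mul_le_mul_of_nonneg_left ?_ hK
        exact (U 0 t).le_of_opNorm_le (hUb 0 t le_rfl ht.1 ht.2) _
    _ ≤ K * (c₃ * ((c₃ * (c₁ * ‖f‖)) * (t' - t))) := by
        refine mul_le_mul_of_nonneg_left (mul_le_mul_of_nonneg_left hdiff hc₃) hK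
    _ = (K*c₁*c₃*c₃) * (t' - t) * ‖f‖ := by ring

/-- One Picard iteration step. -/
def PhiMap {B : Type*} [NormedAddCommGroup B] [NormedSpace ℝ B]
    (T : ℝ) (μ : StrongDual ℝ B) (U : (ℝ → StrongDual ℝ B) → ℝ → ℝ → (B →L[ℝ] B))
    (ξ : ℝ → StrongDual ℝ B) : ℝ → StrongDual ℝ B :=
  fun t => if t ∈ Icc (0:ℝ) T then μ.comp (U ξ 0 t) else μ

/-- The Picard iteration sequence. -/
def seqIter {B : Type*} [NormedAddCommGroup B] [NormedSpace ℝ B]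
    (T : ℝ) (μ : StrongDual ℝ B) (U : (ℝ → StrongDual ℝ B) → ℝ → ℝ → (B →L[ℝ] B)) :
    ℕ → ℝ → StrongDual ℝ B
  | 0 => fun _ => μ
  | n+1 => PhiMap T μ U (seqIter T μ U n)

example {B : Type*} [NormedAddCommGroup B] [NormedSpace ℝ B]
    (T : ℝ) (μ : StrongDual ℝ B) (U : (ℝ → StrongDual ℝ B) → ℝ → ℝ → (B →L[ℝ] B)) (n : ℕ) :
    seqIter T μ U (n+1) = PhiMap T μ U (seqIter T μ U n) := rfl

/-- under `c₁c₂c₃KT < 1` the map `ξ ↦ (t ↦ Ũ^{t,0}[ξ]μ)` is a contraction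
with constant `c₁c₂c₃KT`; it has a fixed point, unique on `[0,T]`, and the fixed points
are exactly the solutions of the path-dependent kinetic equation. -/
theorem stmt1
    {B D : Type*} [NormedAddCommGroup B] [NormedSpace ℝ B] [CompleteSpace B]
    [NormedAddCommGroup D] [NormedSpace ℝ D] [CompleteSpace D]
    (ι : D →L[ℝ] B) (hιdense : DenseRange ι) (hιnorm : ∀ f : D, ‖ι f‖ ≤ ‖f‖)
    (T K c₁ c₂ c₃ : ℝ) (hT : 0 < T) (hK : 0 < K)
    (hc₁ : 0 < c₁) (hc₂ : 0 < c₂) (hc₃ : 0 < c₃)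
    (M : Set (StrongDual ℝ B)) (hMne : M.Nonempty) (hMconv : Convex ℝ M)
    (hMbdd : ∀ ν ∈ M, ‖ν‖ ≤ K) (hMclB : IsClosed M)
    (hMclD : IsClosed (embDual ι '' M))
    (μ : StrongDual ℝ B) (hμ : μ ∈ M)
    (A : (ℝ → StrongDual ℝ B) → ℝ → (D →L[ℝ] B))
    (U : (ℝ → StrongDual ℝ B) → ℝ → ℝ → (B →L[ℝ] B))
    (UD : (ℝ → StrongDual ℝ B) → ℝ → ℝ → (D →L[ℝ] D))
    (hAbdd : ∀ ξ, AdmCurve ι M T ξ → ∀ t ∈ Icc (0:ℝ) T, ‖A ξ t‖ ≤ c₁)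
    (hAlip : ∀ ξ η, AdmCurve ι M T ξ → AdmCurve ι M T η → ∀ t ∈ Icc (0:ℝ) T,
      ‖A ξ t - A η t‖ ≤
        c₁ * ⨆ s : Icc (0:ℝ) T, ‖embDual ι (ξ (s:ℝ)) - embDual ι (η (s:ℝ))‖)
    (hUid : ∀ ξ t, U ξ t t = ContinuousLinearMap.id ℝ B)
    (hUchain : ∀ ξ t s r, t ≤ s → s ≤ r → (U ξ t s).comp (U ξ s r) = U ξ t r)
    (hUDcompat : ∀ ξ t s f, ι (UD ξ t s f) = U ξ t s (ι f))
    (hUbdd : ∀ ξ, AdmCurve ι M T ξ → ∀ t s, 0 ≤ t → t ≤ s → s ≤ T → ‖U ξ t s‖ ≤ c₃)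
    (hUDbdd : ∀ ξ, AdmCurve ι M T ξ → ∀ t s, 0 ≤ t → t ≤ s → s ≤ T → ‖UD ξ t s‖ ≤ c₂)
    (hUcont : ∀ ξ, AdmCurve ι M T ξ → ∀ v : B,
      ContinuousOn (fun q : ℝ × ℝ => U ξ q.1 q.2 v)
        {q : ℝ × ℝ | 0 ≤ q.1 ∧ q.1 ≤ q.2 ∧ q.2 ≤ T})
    (hgen₁ : ∀ ξ, AdmCurve ι M T ξ → ∀ (f : D) (t : ℝ), t ∈ Icc (0:ℝ) T →
      ∀ s ∈ Icc t T,
      HasDerivWithinAt (fun r => U ξ t r (ι f)) (U ξ t s (A ξ s f)) (Icc t T) s)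
    (hgen₂ : ∀ ξ, AdmCurve ι M T ξ → ∀ (f : D) (r : ℝ), r ∈ Icc (0:ℝ) T →
      ∀ s ∈ Icc (0:ℝ) r,
      HasDerivWithinAt (fun q => U ξ q r (ι f)) (-(A ξ s (UD ξ s r f)))
        (Icc (0:ℝ) r) s)
    (hpres : ∀ ξ, AdmCurve ι M T ξ → ∀ t s, 0 ≤ t → t ≤ s → s ≤ T →
      ∀ ν ∈ M, ν.comp (U ξ t s) ∈ M)
    (hsmall : c₁ * c₂ * c₃ * K * T < 1) :
    (∀ ξ₁ ξ₂, AdmCurve ι M T ξ₁ → AdmCurve ι M T ξ₂ → ξ₁ 0 = μ → ξ₂ 0 = μ →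
      (⨆ t : Icc (0:ℝ) T,
        ‖embDual ι (μ.comp (U ξ₁ 0 (t:ℝ))) - embDual ι (μ.comp (U ξ₂ 0 (t:ℝ)))‖) ≤
      (c₁ * c₂ * c₃ * K * T) *
        ⨆ s : Icc (0:ℝ) T, ‖embDual ι (ξ₁ (s:ℝ)) - embDual ι (ξ₂ (s:ℝ))‖) ∧
    (∃ ξ, AdmCurve ι M T ξ ∧ ξ 0 = μ ∧
      ∀ t ∈ Icc (0:ℝ) T, ξ t = μ.comp (U ξ 0 t)) ∧
    (∀ ξ η, AdmCurve ι M T ξ → AdmCurve ι M T η → ξ 0 = μ → η 0 = μ →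
      (∀ t ∈ Icc (0:ℝ) T, ξ t = μ.comp (U ξ 0 t)) →
      (∀ t ∈ Icc (0:ℝ) T, η t = μ.comp (U η 0 t)) → EqOn ξ η (Icc (0:ℝ) T)) ∧
    (∀ ξ, AdmCurve ι M T ξ → ξ 0 = μ →
      ((∀ t ∈ Icc (0:ℝ) T, ξ t = μ.comp (U ξ 0 t)) ↔
        (∀ (f : D), ∀ t ∈ Icc (0:ℝ) T,
          HasDerivWithinAt (fun s => ξ s (ι f)) (ξ t (A ξ t f)) (Icc (0:ℝ) T) t))) := by
  haveI hne : Nonempty (Icc (0:ℝ) T) := ⟨⟨0, le_rfl, hT.le⟩⟩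
  have hk0 : (0:ℝ) ≤ c₁*c₂*c₃*K*T := by positivity
  have hμK : ‖μ‖ ≤ K := hMbdd μ hμ
  have hsupB : ∀ ξ η : ℝ → StrongDual ℝ B, AdmCurve ι M T ξ → AdmCurve ι M T η →
      BddAbove (range fun s : Icc (0:ℝ) T =>
        ‖embDual ι (ξ (s:ℝ)) - embDual ι (η (s:ℝ))‖) := by
    intro ξ η hξ hη
    refine ⟨2*K, ?_⟩
    rintro x ⟨s, rfl⟩
    have h1 : ‖embDual ι (ξ (s:ℝ))‖ ≤ K :=
      (embDual_norm_le ι hιnorm _).trans (hMbdd _ (hξ.1 s s.2))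
    have h2 : ‖embDual ι (η (s:ℝ))‖ ≤ K :=
      (embDual_norm_le ι hιnorm _).trans (hMbdd _ (hη.1 s s.2))
    calc ‖embDual ι (ξ (s:ℝ)) - embDual ι (η (s:ℝ))‖
        ≤ ‖embDual ι (ξ (s:ℝ))‖ + ‖embDual ι (η (s:ℝ))‖ := norm_sub_le _ _
      _ ≤ 2*K := by linarith
  have hΔnn : ∀ ξ η : ℝ → StrongDual ℝ B,
      (0:ℝ) ≤ ⨆ s : Icc (0:ℝ) T, ‖embDual ι (ξ (s:ℝ)) - embDual ι (η (s:ℝ))‖ :=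
    fun ξ η => Real.iSup_nonneg fun s => norm_nonneg _
  have hcore : ∀ ξ₁ ξ₂, AdmCurve ι M T ξ₁ → AdmCurve ι M T ξ₂ → ∀ t ∈ Icc (0:ℝ) T,
      ‖embDual ι (μ.comp (U ξ₁ 0 t)) - embDual ι (μ.comp (U ξ₂ 0 t))‖
        ≤ (c₁*c₂*c₃*K*T) *
          ⨆ s : Icc (0:ℝ) T, ‖embDual ι (ξ₁ (s:ℝ)) - embDual ι (ξ₂ (s:ℝ))‖ := by
    intro ξ₁ ξ₂ h₁ h₂ t ht
    have hest := contractionEst ι hιnorm T K c₁ c₂ c₃ hT.le hK.le hc₁.le hc₂.le hc₃.le μ hμK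
      A U UD hUid hUDcompat ξ₁ ξ₂
      (fun a b u1 u2 u3 => hUbdd ξ₁ h₁ a b u1 u2 u3)
      (fun a b u1 u2 u3 => hUDbdd ξ₂ h₂ a b u1 u2 u3)
      (hUcont ξ₁ h₁) (hgen₁ ξ₁ h₁) (hgen₂ ξ₂ h₂)
      (⨆ s : Icc (0:ℝ) T, ‖embDual ι (ξ₁ (s:ℝ)) - embDual ι (ξ₂ (s:ℝ))‖)
      (hΔnn ξ₁ ξ₂) (fun s hs => hAlip ξ₁ ξ₂ h₁ h₂ s hs) t ht
    refine hest.trans ?_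
    have hmm : c₁*c₂*c₃*K*t ≤ c₁*c₂*c₃*K*T :=
      mul_le_mul_of_nonneg_left ht.2 (by positivity)
    exact mul_le_mul_of_nonneg_right hmm (hΔnn ξ₁ ξ₂)
  refine ⟨?_, ?_, ?_, ?_⟩
  · -- 1: contraction
    intro ξ₁ ξ₂ h₁ h₂ _ _
    exact ciSup_le fun t => hcore ξ₁ ξ₂ h₁ h₂ t t.2
  · -- 2: existence
    set sq : ℕ → ℝ → StrongDual ℝ B := seqIter T μ U with hsq
    have hsqS : ∀ n, sq (n+1) = PhiMap T μ U (sq n) := fun n => rfl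
    have hΦval : ∀ (ξ : ℝ → StrongDual ℝ B) (t : ℝ), t ∈ Icc (0:ℝ) T →
        PhiMap T μ U ξ t = μ.comp (U ξ 0 t) := by
      intro ξ t ht
      simp only [PhiMap, if_pos ht]
    have hseq0 : ∀ n, sq n 0 = μ := by
      intro n
      cases n with
      | zero => rfl
      | succ n =>
        rw [hsqS, hΦval _ 0 ⟨le_rfl, hT.le⟩, hUid]
        exact μ.comp_id
    have hΦadm : ∀ ξ, AdmCurve ι M T ξ → AdmCurve ι M T (PhiMap T μ U ξ) := by
      intro ξ hξ
      constructor
      · intro t ht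
        rw [hΦval ξ t ht]
        exact hpres ξ hξ 0 t le_rfl ht.1 ht.2 μ hμ
      · have hlip : LipschitzOnWith (Real.toNNReal (K*c₁*c₃*c₃))
            (fun t => embDual ι (PhiMap T μ U ξ t)) (Icc (0:ℝ) T) := by
          rw [lipschitzOnWith_iff_dist_le_mul]
          intro x hx y hy
          rw [Real.coe_toNNReal _ (by positivity)]
          have hest : ∀ a b : ℝ, a ∈ Icc (0:ℝ) T → b ∈ Icc (0:ℝ) T → b ≤ a →
              dist (embDual ι (PhiMap T μ U ξ a)) (embDual ι (PhiMap T μ U ξ b))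
                ≤ K*c₁*c₃*c₃ * dist a b := by
            intro a b ha hb hba
            rw [dist_eq_norm, hΦval ξ a ha, hΦval ξ b hb, Real.dist_eq,
              abs_of_nonneg (by linarith : (0:ℝ) ≤ a - b)]
            exact timeEst ι T K c₁ c₃ hK.le hc₁.le hc₃.le μ hμK (A ξ) (U ξ)
              (hUid ξ) (hUchain ξ) (hAbdd ξ hξ)
              (fun a b u1 u2 u3 => hUbdd ξ hξ a b u1 u2 u3)
              (hgen₁ ξ hξ) b a hb ha hba
          rcases le_total y x with h | h
          · exact hest x y hx hy h
          · rw [dist_comm (embDual ι (PhiMap T μ U ξ x)), dist_comm x y]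
            exact hest y x hy hx h
        exact hlip.continuousOn
    have hadmn : ∀ n, AdmCurve ι M T (sq n) := by
      intro n
      induction n with
      | zero =>
        refine ⟨fun t _ => hμ, ?_⟩
        show ContinuousOn (fun _ : ℝ => embDual ι μ) (Icc (0:ℝ) T)
        exact continuousOn_const
      | succ n ih => rw [hsqS]; exact hΦadm _ ih
    set Δ₀ : ℝ := ⨆ s : Icc (0:ℝ) T, ‖embDual ι (sq 1 (s:ℝ)) - embDual ι (sq 0 (s:ℝ))‖
      with hΔ₀def
    set k : ℝ := c₁*c₂*c₃*K*T with hkk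
    have hk0' : (0:ℝ) ≤ k := hk0
    have hΔ₀0 : (0:ℝ) ≤ Δ₀ := hΔnn _ _
    have hgeo : ∀ n, (⨆ s : Icc (0:ℝ) T,
        ‖embDual ι (sq (n+1) (s:ℝ)) - embDual ι (sq n (s:ℝ))‖) ≤ Δ₀ * k^n := by
      intro n
      induction n with
      | zero => simp; exact le_rfl
      | succ n ih =>
        have hstep : (⨆ s : Icc (0:ℝ) T,
            ‖embDual ι (sq (n+2) (s:ℝ)) - embDual ι (sq (n+1) (s:ℝ))‖)
            ≤ k * ⨆ s : Icc (0:ℝ) T,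
              ‖embDual ι (sq (n+1) (s:ℝ)) - embDual ι (sq n (s:ℝ))‖ := by
          refine ciSup_le fun s => ?_
          have h := hcore (sq (n+1)) (sq n) (hadmn _) (hadmn _) s s.2
          rw [← hΦval (sq (n+1)) s s.2, ← hΦval (sq n) s s.2, ← hsqS, ← hsqS] at h
          exact h
        refine hstep.trans ?_
        calc k * (⨆ s : Icc (0:ℝ) T,
              ‖embDual ι (sq (n+1) (s:ℝ)) - embDual ι (sq n (s:ℝ))‖)
            ≤ k * (Δ₀ * k^n) := mul_le_mul_of_nonneg_left ih hk0'
          _ = Δ₀ * k^(n+1) := by ring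
    have hptdist : ∀ t : ℝ, t ∈ Icc (0:ℝ) T → ∀ n : ℕ,
        dist (embDual ι (sq n t)) (embDual ι (sq (n+1) t)) ≤ Δ₀ * k^n := by
      intro t ht n
      rw [dist_eq_norm, norm_sub_rev]
      exact le_trans
        (le_ciSup (hsupB (sq (n+1)) (sq n) (hadmn _) (hadmn _)) (⟨t, ht⟩ : Icc (0:ℝ) T))
        (hgeo n)
    have hlimex : ∀ t : ℝ, ∃ ν, ν ∈ M ∧ (t ∈ Icc (0:ℝ) T →
        Tendsto (fun n => embDual ι (sq n t)) atTop (𝓝 (embDual ι ν))) := by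
      intro t
      by_cases ht : t ∈ Icc (0:ℝ) T
      · have hc : CauchySeq (fun n => embDual ι (sq n t)) :=
          cauchySeq_of_le_geometric k Δ₀ hsmall (hptdist t ht)
        obtain ⟨l, hl⟩ := cauchySeq_tendsto_of_complete hc
        have hmem : l ∈ embDual ι '' M :=
          hMclD.mem_of_tendsto hl
            (Eventually.of_forall fun n => ⟨sq n t, (hadmn n).1 t ht, rfl⟩)
        obtain ⟨ν, hν, hνe⟩ := hmem
        exact ⟨ν, hν, fun _ => by rw [hνe]; exact hl⟩
      · exact ⟨μ, hμ, fun h => absurd h ht⟩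
    choose ζ hζM hζlim using hlimex
    have hζ0 : ζ 0 = μ := by
      have h0 : (0:ℝ) ∈ Icc (0:ℝ) T := ⟨le_rfl, hT.le⟩
      have h1 := hζlim 0 h0
      have h3 : (fun n : ℕ => embDual ι (sq n 0)) = fun _ : ℕ => embDual ι μ := by
        funext n; rw [hseq0 n]
      rw [h3] at h1
      exact embDual_inj hιdense (tendsto_nhds_unique h1 tendsto_const_nhds)
    have htail : ∀ (n : ℕ) (t : ℝ), t ∈ Icc (0:ℝ) T →
        ‖embDual ι (sq n t) - embDual ι (ζ t)‖ ≤ Δ₀ * k^n / (1-k) := by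
      intro n t ht
      have := dist_le_of_le_geometric_of_tendsto k Δ₀ hsmall (hptdist t ht) (hζlim t ht) n
      rwa [dist_eq_norm] at this
    have hΔζ : ∀ n : ℕ, (⨆ s : Icc (0:ℝ) T,
        ‖embDual ι (sq n (s:ℝ)) - embDual ι (ζ (s:ℝ))‖) ≤ Δ₀ * k^n / (1-k) :=
      fun n => ciSup_le fun s => htail n s s.2
    have htend0 : Tendsto (fun n : ℕ => Δ₀ * k^n / (1-k)) atTop (𝓝 0) := by
      have h := tendsto_pow_atTop_nhds_zero_of_lt_one hk0' hsmall
      have h2 := h.const_mul (Δ₀ / (1-k))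
      simp only [mul_zero] at h2
      exact h2.congr fun n => by ring
    have hζadm : AdmCurve ι M T ζ := by
      refine ⟨fun t ht => hζM t, ?_⟩
      have hTU : TendstoUniformlyOn (fun n t => embDual ι (sq n t))
          (fun t => embDual ι (ζ t)) atTop (Icc (0:ℝ) T) := by
        rw [Metric.tendstoUniformlyOn_iff]
        intro ε hε
        filter_upwards [htend0.eventually (gt_mem_nhds hε)] with n hn t ht
        have hb := htail n t ht
        rw [dist_eq_norm, norm_sub_rev]
        exact lt_of_le_of_lt hb hn
      exact hTU.continuousOn (Eventually.of_forall fun n => (hadmn n).2).frequently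
    refine ⟨ζ, hζadm, hζ0, ?_⟩
    intro t ht
    have h1 : Tendsto (fun n : ℕ => embDual ι (sq (n+1) t)) atTop (𝓝 (embDual ι (ζ t))) :=
      (hζlim t ht).comp (tendsto_add_atTop_nat 1)
    have h2 : Tendsto (fun n : ℕ => embDual ι (sq (n+1) t)) atTop
        (𝓝 (embDual ι (μ.comp (U ζ 0 t)))) := by
      rw [tendsto_iff_norm_sub_tendsto_zero]
      have hb : ∀ n : ℕ, ‖embDual ι (sq (n+1) t) - embDual ι (μ.comp (U ζ 0 t))‖
          ≤ k * (Δ₀ * k^n / (1-k)) := by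
        intro n
        have heq : sq (n+1) t = μ.comp (U (sq n) 0 t) := by
          rw [hsqS, hΦval _ t ht]
        rw [heq]
        exact le_trans (hcore (sq n) ζ (hadmn n) hζadm t ht)
          (mul_le_mul_of_nonneg_left (hΔζ n) hk0')
      refine squeeze_zero (fun n => norm_nonneg _) hb ?_
      have := htend0.const_mul k
      simpa using this
    exact embDual_inj hιdense (tendsto_nhds_unique h1 h2)
  · -- 3: uniqueness
    intro ξ η hξ hη _ _ hfξ hfη
    have hle : (⨆ s : Icc (0:ℝ) T, ‖embDual ι (ξ (s:ℝ)) - embDual ι (η (s:ℝ))‖)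
        ≤ (c₁*c₂*c₃*K*T) *
          ⨆ s : Icc (0:ℝ) T, ‖embDual ι (ξ (s:ℝ)) - embDual ι (η (s:ℝ))‖ := by
      refine ciSup_le fun s => ?_
      have h := hcore ξ η hξ hη s s.2
      rw [← hfξ s s.2, ← hfη s s.2] at h
      exact h
    have hΔ : (⨆ s : Icc (0:ℝ) T, ‖embDual ι (ξ (s:ℝ)) - embDual ι (η (s:ℝ))‖) ≤ 0 := by
      nlinarith [hΔnn ξ η, hsmall, hle]
    intro s hs
    have h1 : ‖embDual ι (ξ s) - embDual ι (η s)‖ ≤ 0 :=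
      le_trans (le_ciSup (hsupB ξ η hξ hη) (⟨s, hs⟩ : Icc (0:ℝ) T)) hΔ
    exact embDual_inj hιdense (sub_eq_zero.1 (norm_le_zero_iff.1 h1))
  · -- 4: kinetic equation
    intro ξ hadm hξ0
    constructor
    · intro hfix f t ht
      have h := hgen₁ ξ hadm f 0 ⟨le_rfl, hT.le⟩ t ht
      have h2 := μ.hasFDerivAt.comp_hasDerivWithinAt t h
      have heq : ∀ r ∈ Icc (0:ℝ) T, ξ r (ι f) = μ (U ξ 0 r (ι f)) := by
        intro r hr; rw [hfix r hr]; rfl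
      have h3 : HasDerivWithinAt (fun r => ξ r (ι f)) (μ (U ξ 0 t (A ξ t f)))
          (Icc (0:ℝ) T) t := h2.congr heq (heq t ht)
      have h4 : ξ t (A ξ t f) = μ (U ξ 0 t (A ξ t f)) := by rw [hfix t ht]; rfl
      rw [h4]; exact h3
    · intro hkin t ht
      have hsub : Icc (0:ℝ) t ⊆ Icc (0:ℝ) T := Icc_subset_Icc le_rfl ht.2
      have key : ∀ f : D, ξ t (ι f) = (μ.comp (U ξ 0 t)) (ι f) := by
        intro f
        have hder : ∀ s ∈ Icc (0:ℝ) t,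
            HasDerivWithinAt (fun r => ξ r (U ξ r t (ι f))) 0 (Icc (0:ℝ) t) s := by
          intro s hs
          have hsT := hsub hs
          have hC : ∀ᶠ r in nhdsWithin s (Icc (0:ℝ) t), ‖ξ r‖ ≤ K := by
            filter_upwards [eventually_mem_nhdsWithin] with r hr
            exact hMbdd _ (hadm.1 r (hsub hr))
          have hd1 : HasDerivWithinAt (fun r => ξ r (U ξ s t (ι f)))
              (ξ s ((A ξ s) (UD ξ s t f))) (Icc (0:ℝ) t) s := by
            have h := hkin (UD ξ s t f) s hsT
            rw [hUDcompat ξ s t f] at h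
            exact h.mono hsub
          have hd2 : HasDerivWithinAt (fun r => U ξ r t (ι f))
              (-((A ξ s) (UD ξ s t f))) (Icc (0:ℝ) t) s := hgen₂ ξ hadm f t ht s hs
          have hd3 : Tendsto (fun r => ξ r (-((A ξ s) (UD ξ s t f))))
              (nhdsWithin s (Icc (0:ℝ) t)) (𝓝 (ξ s (-((A ξ s) (UD ξ s t f))))) := by
            refine weak_tendsto hιdense _ ξ s hC (hMbdd _ (hadm.1 s hsT)) ?_ _
            exact (hadm.2 s hsT).mono hsub
          have hre := prodRule (fun r => ξ r) (fun r => U ξ r t (ι f)) (Icc (0:ℝ) t) s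
            (-((A ξ s) (UD ξ s t f))) (ξ s ((A ξ s) (UD ξ s t f))) K hC hd1 hd2 hd3
          exact hre.congr_deriv (by rw [map_neg]; ring)
        have hmvt := Convex.norm_image_sub_le_of_norm_hasDerivWithin_le (C := 0) hder
          (fun s _ => by simp) (convex_Icc 0 t) ⟨le_rfl, ht.1⟩ ⟨ht.1, le_rfl⟩
        have hg0 : ξ t (U ξ t t (ι f)) = ξ 0 (U ξ 0 t (ι f)) := by
          have hz : ‖ξ t (U ξ t t (ι f)) - ξ 0 (U ξ 0 t (ι f))‖ ≤ 0 := by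
            simpa using hmvt
          exact sub_eq_zero.1 (norm_le_zero_iff.1 hz)
        have h1 : ξ t (U ξ t t (ι f)) = ξ t (ι f) := by rw [hUid]; rfl
        rw [h1, hξ0] at hg0
        exact hg0
      exact embDual_inj hιdense (ContinuousLinearMap.ext key)
end
end

section
/- Under the local well-posedness assumptions with c₁ c₂ c₃ K T < 1, the solution map μ ↦ Φ^·(μ) of the path-dependent kinetic equation is Lipschitz continuous in initial data: for μ, η ∈ M, sup_{t∈[0,T]} ‖Φ^t(μ) − Φ^t(η)‖_{D*} ≤ (c₂ / (1 − c₁c₂c₃KT)) ‖μ − η‖_{D*}. -/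
set_option autoImplicit false

open MeasureTheory Set NormedSpace

noncomputable section

set_option maxHeartbeats 2000000 in
/-- Lipschitz dependence of the solution of the path-dependent kinetic
equation on the initial data, with constant `c₂/(1 − c₁c₂c₃KT)`. -/
theorem stmt2
    {B D : Type*} [NormedAddCommGroup B] [NormedSpace ℝ B] [CompleteSpace B]
    [NormedAddCommGroup D] [NormedSpace ℝ D] [CompleteSpace D]
    (ι : D →L[ℝ] B) (hιdense : DenseRange ι) (hιnorm : ∀ f : D, ‖ι f‖ ≤ ‖f‖)
    (T K c₁ c₂ c₃ : ℝ) (hT : 0 < T) (hK : 0 < K)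
    (hc₁ : 0 < c₁) (hc₂ : 0 < c₂) (hc₃ : 0 < c₃)
    (M : Set (StrongDual ℝ B)) (hMne : M.Nonempty) (hMconv : Convex ℝ M)
    (hMbdd : ∀ ν ∈ M, ‖ν‖ ≤ K) (hMclB : IsClosed M)
    (hMclD : IsClosed (embDual ι '' M))
    (μ : StrongDual ℝ B) (hμ : μ ∈ M)
    (A : (ℝ → StrongDual ℝ B) → ℝ → (D →L[ℝ] B))
    (U : (ℝ → StrongDual ℝ B) → ℝ → ℝ → (B →L[ℝ] B))
    (UD : (ℝ → StrongDual ℝ B) → ℝ → ℝ → (D →L[ℝ] D))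
    (hAbdd : ∀ ξ, AdmCurve ι M T ξ → ∀ t ∈ Icc (0:ℝ) T, ‖A ξ t‖ ≤ c₁)
    (hAlip : ∀ ξ η, AdmCurve ι M T ξ → AdmCurve ι M T η → ∀ t ∈ Icc (0:ℝ) T,
      ‖A ξ t - A η t‖ ≤
        c₁ * ⨆ s : Icc (0:ℝ) T, ‖embDual ι (ξ (s:ℝ)) - embDual ι (η (s:ℝ))‖)
    (hUid : ∀ ξ t, U ξ t t = ContinuousLinearMap.id ℝ B)
    (hUchain : ∀ ξ t s r, t ≤ s → s ≤ r → (U ξ t s).comp (U ξ s r) = U ξ t r)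
    (hUDcompat : ∀ ξ t s f, ι (UD ξ t s f) = U ξ t s (ι f))
    (hUbdd : ∀ ξ, AdmCurve ι M T ξ → ∀ t s, 0 ≤ t → t ≤ s → s ≤ T → ‖U ξ t s‖ ≤ c₃)
    (hUDbdd : ∀ ξ, AdmCurve ι M T ξ → ∀ t s, 0 ≤ t → t ≤ s → s ≤ T → ‖UD ξ t s‖ ≤ c₂)
    (hUcont : ∀ ξ, AdmCurve ι M T ξ → ∀ v : B,
      ContinuousOn (fun q : ℝ × ℝ => U ξ q.1 q.2 v)
        {q : ℝ × ℝ | 0 ≤ q.1 ∧ q.1 ≤ q.2 ∧ q.2 ≤ T})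
    (hgen₁ : ∀ ξ, AdmCurve ι M T ξ → ∀ (f : D) (t : ℝ), t ∈ Icc (0:ℝ) T →
      ∀ s ∈ Icc t T,
      HasDerivWithinAt (fun r => U ξ t r (ι f)) (U ξ t s (A ξ s f)) (Icc t T) s)
    (hgen₂ : ∀ ξ, AdmCurve ι M T ξ → ∀ (f : D) (r : ℝ), r ∈ Icc (0:ℝ) T →
      ∀ s ∈ Icc (0:ℝ) r,
      HasDerivWithinAt (fun q => U ξ q r (ι f)) (-(A ξ s (UD ξ s r f)))
        (Icc (0:ℝ) r) s)
    (hpres : ∀ ξ, AdmCurve ι M T ξ → ∀ t s, 0 ≤ t → t ≤ s → s ≤ T →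
      ∀ ν ∈ M, ν.comp (U ξ t s) ∈ M)
    (hsmall : c₁ * c₂ * c₃ * K * T < 1) :
    ∀ η, η ∈ M → ∀ ξc ηc, AdmCurve ι M T ξc → AdmCurve ι M T ηc →
    ξc 0 = μ → ηc 0 = η →
    (∀ t ∈ Icc (0:ℝ) T, ξc t = μ.comp (U ξc 0 t)) →
    (∀ t ∈ Icc (0:ℝ) T, ηc t = η.comp (U ηc 0 t)) →
    (⨆ t : Icc (0:ℝ) T, ‖embDual ι (ξc (t:ℝ)) - embDual ι (ηc (t:ℝ))‖) ≤
      (c₂ / (1 - c₁ * c₂ * c₃ * K * T)) * ‖embDual ι (μ - η)‖ := by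
  intro η hη ξc ηc hξadm hηadm hξ0 hη0 hξfix hηfix
  haveI : Nonempty (Icc (0:ℝ) T) := ⟨⟨0, le_refl 0, hT.le⟩⟩
  set Δ : ℝ := ⨆ s : Icc (0:ℝ) T, ‖embDual ι (ξc (s:ℝ)) - embDual ι (ηc (s:ℝ))‖ with hΔdef
  have hΔ0 : 0 ≤ Δ := Real.iSup_nonneg fun _ => norm_nonneg _
  clear_value Δ
  have key : ∀ t ∈ Icc (0:ℝ) T,
      ‖embDual ι (ξc t) - embDual ι (ηc t)‖ ≤
        c₂ * ‖embDual ι (μ - η)‖ + c₁ * c₂ * c₃ * K * T * Δ := by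
    intro t ht
    have ht0 : (0:ℝ) ≤ t := ht.1
    have htT : t ≤ T := ht.2
    refine ContinuousLinearMap.opNorm_le_bound _ ?_ ?_
    · have h1 : 0 ≤ c₂ * ‖embDual ι (μ - η)‖ := by positivity
      have h2 : 0 ≤ c₁ * c₂ * c₃ * K * T * Δ :=
        mul_nonneg (by positivity) hΔ0
      linarith
    intro f
    set w : ℝ → B := fun s => U ξc 0 s (ι (UD ηc s t f)) with hw
    -- derivative of w
    have hderiv : ∀ s₀ ∈ Icc (0:ℝ) t,
        HasDerivWithinAt w
          (U ξc 0 s₀ (A ξc s₀ (UD ηc s₀ t f) - A ηc s₀ (UD ηc s₀ t f)))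
          (Icc (0:ℝ) t) s₀ := by
      intro s₀ hs₀
      have hv : HasDerivWithinAt (fun q => ι (UD ηc q t f))
          (-(A ηc s₀ (UD ηc s₀ t f))) (Icc (0:ℝ) t) s₀ :=
        (hgen₂ ηc hηadm f t ht s₀ hs₀).congr
          (fun y _ => (hUDcompat ηc y t f)) (hUDcompat ηc s₀ t f)
      have hg : HasDerivWithinAt (fun r => U ξc 0 r (ι (UD ηc s₀ t f)))
          (U ξc 0 s₀ (A ξc s₀ (UD ηc s₀ t f))) (Icc (0:ℝ) t) s₀ :=
        (hgen₁ ξc hξadm (UD ηc s₀ t f) 0 ⟨le_rfl, hT.le⟩ s₀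
          ⟨hs₀.1, hs₀.2.trans htT⟩).mono (Icc_subset_Icc le_rfl htT)
      rw [hasDerivWithinAt_iff_tendsto_slope]
      have heq : ∀ r : ℝ, slope w s₀ r =
          U ξc 0 r (slope (fun q => ι (UD ηc q t f)) s₀ r)
            + slope (fun r => U ξc 0 r (ι (UD ηc s₀ t f))) s₀ r := by
        intro r
        simp only [slope_def_module, hw]
        rw [_root_.map_smul, map_sub]
        rw [← smul_add]
        congr 1
        abel
      have hslope := hasDerivWithinAt_iff_tendsto_slope.mp hv
      have hT1a : Filter.Tendsto
          (fun r => U ξc 0 r (slope (fun q => ι (UD ηc q t f)) s₀ r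
            - (-(A ηc s₀ (UD ηc s₀ t f)))))
          (nhdsWithin s₀ (Icc (0:ℝ) t \ {s₀})) (nhds 0) := by
        apply squeeze_zero_norm'
          (a := fun r => c₃ * ‖slope (fun q => ι (UD ηc q t f)) s₀ r
            - (-(A ηc s₀ (UD ηc s₀ t f)))‖)
        · filter_upwards [self_mem_nhdsWithin] with r hr
          refine le_trans ((U ξc 0 r).le_opNorm _) ?_
          exact mul_le_mul_of_nonneg_right
            (hUbdd ξc hξadm 0 r le_rfl hr.1.1 (hr.1.2.trans htT)) (norm_nonneg _)
        · have h0 : Filter.Tendsto (fun r => slope (fun q => ι (UD ηc q t f)) s₀ r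
              - (-(A ηc s₀ (UD ηc s₀ t f))))
              (nhdsWithin s₀ (Icc (0:ℝ) t \ {s₀})) (nhds 0) := by
            simpa using hslope.sub (tendsto_const_nhds
              (x := -(A ηc s₀ (UD ηc s₀ t f))))
          simpa using h0.norm.const_mul c₃
      have hT1b : Filter.Tendsto (fun r => U ξc 0 r (-(A ηc s₀ (UD ηc s₀ t f))))
          (nhdsWithin s₀ (Icc (0:ℝ) t \ {s₀}))
          (nhds (U ξc 0 s₀ (-(A ηc s₀ (UD ηc s₀ t f))))) := by
        have hcont : ContinuousOn
            (fun r : ℝ => U ξc 0 r (-(A ηc s₀ (UD ηc s₀ t f)))) (Icc (0:ℝ) t) := by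
          have h := hUcont ξc hξadm (-(A ηc s₀ (UD ηc s₀ t f)))
          exact h.comp ((continuous_const.prodMk continuous_id).continuousOn)
            (fun r hr => ⟨le_rfl, hr.1, hr.2.trans htT⟩)
        exact (hcont s₀ hs₀).mono_left (nhdsWithin_mono s₀ diff_subset)
      have hT1 : Filter.Tendsto
          (fun r => U ξc 0 r (slope (fun q => ι (UD ηc q t f)) s₀ r))
          (nhdsWithin s₀ (Icc (0:ℝ) t \ {s₀}))
          (nhds (U ξc 0 s₀ (-(A ηc s₀ (UD ηc s₀ t f))))) := by
        have h := hT1a.add hT1b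
        rw [zero_add] at h
        refine h.congr fun r => ?_
        rw [← map_add]
        congr 1
        abel
      have hT2 := hasDerivWithinAt_iff_tendsto_slope.mp hg
      have hlim : U ξc 0 s₀ (A ξc s₀ (UD ηc s₀ t f) - A ηc s₀ (UD ηc s₀ t f))
          = U ξc 0 s₀ (-(A ηc s₀ (UD ηc s₀ t f)))
            + U ξc 0 s₀ (A ξc s₀ (UD ηc s₀ t f)) := by
        rw [← map_add]
        congr 1
        abel
      rw [hlim]
      exact (hT1.add hT2).congr fun r => (heq r).symm
    -- norm bound on the derivative
    have hbound : ∀ s₀ ∈ Icc (0:ℝ) t,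
        ‖U ξc 0 s₀ (A ξc s₀ (UD ηc s₀ t f) - A ηc s₀ (UD ηc s₀ t f))‖ ≤
          c₁ * c₂ * c₃ * Δ * ‖f‖ := by
      intro s₀ hs₀
      have hs₀T : s₀ ∈ Icc (0:ℝ) T := ⟨hs₀.1, hs₀.2.trans htT⟩
      have h1 : ‖U ξc 0 s₀‖ ≤ c₃ := hUbdd ξc hξadm 0 s₀ le_rfl hs₀.1 hs₀T.2
      have h2 : ‖A ξc s₀ - A ηc s₀‖ ≤ c₁ * Δ := by
        have := hAlip ξc ηc hξadm hηadm s₀ hs₀T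
        rwa [← hΔdef] at this
      have h3 : ‖UD ηc s₀ t f‖ ≤ c₂ * ‖f‖ :=
        le_trans ((UD ηc s₀ t).le_opNorm f)
          (mul_le_mul_of_nonneg_right (hUDbdd ηc hηadm s₀ t hs₀.1 hs₀.2 htT)
            (norm_nonneg f))
      have h4 : A ξc s₀ (UD ηc s₀ t f) - A ηc s₀ (UD ηc s₀ t f)
          = (A ξc s₀ - A ηc s₀) (UD ηc s₀ t f) := by
        simp [ContinuousLinearMap.sub_apply]
      have h5 : ‖(A ξc s₀ - A ηc s₀) (UD ηc s₀ t f)‖ ≤ (c₁ * Δ) * (c₂ * ‖f‖) :=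
        le_trans ((A ξc s₀ - A ηc s₀).le_opNorm _)
          (mul_le_mul h2 h3 (norm_nonneg _) (mul_nonneg hc₁.le hΔ0))
      calc ‖U ξc 0 s₀ (A ξc s₀ (UD ηc s₀ t f) - A ηc s₀ (UD ηc s₀ t f))‖
          ≤ ‖U ξc 0 s₀‖ * ‖(A ξc s₀ - A ηc s₀) (UD ηc s₀ t f)‖ := by
            rw [h4]; exact (U ξc 0 s₀).le_opNorm _
        _ ≤ c₃ * ((c₁ * Δ) * (c₂ * ‖f‖)) :=
            mul_le_mul h1 h5 (norm_nonneg _) hc₃.le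
        _ = c₁ * c₂ * c₃ * Δ * ‖f‖ := by ring
    -- mean value inequality
    have hMVT := Convex.norm_image_sub_le_of_norm_hasDerivWithin_le
      hderiv hbound (convex_Icc (0:ℝ) t) ⟨le_rfl, ht0⟩ ⟨ht0, le_rfl⟩
    have hwdiff : ‖w t - w 0‖ ≤ c₁ * c₂ * c₃ * Δ * ‖f‖ * t := by
      have : ‖t - (0:ℝ)‖ = t := by
        rw [sub_zero, Real.norm_eq_abs, abs_of_nonneg ht0]
      rwa [this] at hMVT
    -- endpoint identifications
    have hwt : w t = U ξc 0 t (ι f) := by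
      simp only [hw]
      congr 1
      rw [hUDcompat, hUid]
      rfl
    have hw0 : w 0 = U ηc 0 t (ι f) := by
      simp only [hw]
      rw [hUDcompat, hUid]
      rfl
    -- splitting the pairing
    have happ : (embDual ι (ξc t) - embDual ι (ηc t)) f
        = embDual ι (μ - η) (UD ξc 0 t f) + η (w t - w 0) := by
      rw [hwt, hw0, hξfix t ht, hηfix t ht]
      simp only [embDual, ContinuousLinearMap.sub_apply,
        ContinuousLinearMap.coe_comp', Function.comp_apply, map_sub, hUDcompat]
      ring
    have hterm1 : ‖embDual ι (μ - η) (UD ξc 0 t f)‖ ≤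
        ‖embDual ι (μ - η)‖ * (c₂ * ‖f‖) :=
      le_trans ((embDual ι (μ - η)).le_opNorm _)
        (mul_le_mul_of_nonneg_left
          (le_trans ((UD ξc 0 t).le_opNorm f)
            (mul_le_mul_of_nonneg_right (hUDbdd ξc hξadm 0 t le_rfl ht0 htT)
              (norm_nonneg f)))
          (norm_nonneg _))
    have hterm2 : ‖η (w t - w 0)‖ ≤ K * (c₁ * c₂ * c₃ * Δ * ‖f‖ * t) :=
      le_trans (η.le_opNorm _)
        (mul_le_mul (hMbdd η hη) hwdiff (norm_nonneg _) hK.le)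
    have hfinal : K * (c₁ * c₂ * c₃ * Δ * ‖f‖ * t) ≤
        c₁ * c₂ * c₃ * K * T * Δ * ‖f‖ := by
      have hC : 0 ≤ c₁ * c₂ * c₃ * Δ * ‖f‖ := by
        have := mul_nonneg (mul_nonneg (mul_nonneg (mul_nonneg hc₁.le hc₂.le)
          hc₃.le) hΔ0) (norm_nonneg f)
        linarith
      nlinarith [mul_le_mul_of_nonneg_left htT hC, hK.le]
    calc ‖(embDual ι (ξc t) - embDual ι (ηc t)) f‖
        = ‖embDual ι (μ - η) (UD ξc 0 t f) + η (w t - w 0)‖ := by rw [happ]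
      _ ≤ ‖embDual ι (μ - η) (UD ξc 0 t f)‖ + ‖η (w t - w 0)‖ := norm_add_le _ _
      _ ≤ ‖embDual ι (μ - η)‖ * (c₂ * ‖f‖) + c₁ * c₂ * c₃ * K * T * Δ * ‖f‖ := by
          linarith [hterm2, hfinal]
      _ = (c₂ * ‖embDual ι (μ - η)‖ + c₁ * c₂ * c₃ * K * T * Δ) * ‖f‖ := by ring
  have hΔle : Δ ≤ c₂ * ‖embDual ι (μ - η)‖ + c₁ * c₂ * c₃ * K * T * Δ := by
    have h : (⨆ s : Icc (0:ℝ) T, ‖embDual ι (ξc (s:ℝ)) - embDual ι (ηc (s:ℝ))‖) ≤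
        c₂ * ‖embDual ι (μ - η)‖ + c₁ * c₂ * c₃ * K * T * Δ :=
      ciSup_le fun s => key s s.2
    rwa [← hΔdef] at h
  have h1ρ : 0 < 1 - c₁ * c₂ * c₃ * K * T := by linarith
  rw [div_mul_eq_mul_div, le_div_iff₀ h1ρ]
  nlinarith [hΔle]
end
end

section
/- (Picard iteration bound for the adapted kinetic equation.) Let (ξⁿ) be a sequence of curves in C_μ([0,T], M(D*)) defined by ξ⁰_t = μ for all t and ξⁿ_t = Ũ^{t,0}[ξ^{n−1}_{≤t}]μ, where the propagators depend only on the past of the curve (adaptedness). Under the standing assumptions (Lipschitz constant c₁ for generators, propagator bounds c₂, c₃, mass bound K), one has for all n ≥ 1 and t ∈ [0,T]: sup_{0≤r≤t} ‖ξⁿ_r − ξ^{n−1}_r‖_{D*} ≤ (c₁c₂c₃Kt)ⁿ / n!. -/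
set_option autoImplicit false
set_option maxHeartbeats 4000000

open MeasureTheory Set NormedSpace

noncomputable section

/-- the Picard iterates `ξⁿ_t = Ũ^{t,0}[ξ^{n−1}_{≤t}]μ` of the adapted
kinetic equation satisfy `sup_{0≤r≤t} ‖ξⁿ_r − ξ^{n−1}_r‖_{D*} ≤ (c₁c₂c₃Kt)ⁿ/n!`. -/
theorem stmt4
    {B D : Type*} [NormedAddCommGroup B] [NormedSpace ℝ B] [CompleteSpace B]
    [NormedAddCommGroup D] [NormedSpace ℝ D] [CompleteSpace D]
    (ι : D →L[ℝ] B) (hιdense : DenseRange ι) (hιnorm : ∀ f : D, ‖ι f‖ ≤ ‖f‖)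
    (T K c₁ c₂ c₃ : ℝ) (hT : 0 < T) (hK : 0 < K)
    (hc₁ : 0 < c₁) (hc₂ : 0 < c₂) (hc₃ : 0 < c₃)
    (M : Set (StrongDual ℝ B)) (hMne : M.Nonempty) (hMconv : Convex ℝ M)
    (hMbdd : ∀ ν ∈ M, ‖ν‖ ≤ K) (hMclB : IsClosed M)
    (hMclD : IsClosed (embDual ι '' M))
    (μ : StrongDual ℝ B) (hμ : μ ∈ M)
    (A : (ℝ → StrongDual ℝ B) → ℝ → (D →L[ℝ] B))
    (U : (ℝ → StrongDual ℝ B) → ℝ → ℝ → (B →L[ℝ] B))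
    (UD : (ℝ → StrongDual ℝ B) → ℝ → ℝ → (D →L[ℝ] D))
    (hAbdd : ∀ ξ, AdmCurve ι M T ξ → ∀ t ∈ Icc (0:ℝ) T, ‖A ξ t‖ ≤ c₁)
    (hAlip : ∀ ξ η, AdmCurve ι M T ξ → AdmCurve ι M T η → ∀ t ∈ Icc (0:ℝ) T,
      ‖A ξ t - A η t‖ ≤
        c₁ * ⨆ s : Icc (0:ℝ) T, ‖embDual ι (ξ (s:ℝ)) - embDual ι (η (s:ℝ))‖)
    (hUid : ∀ ξ t, U ξ t t = ContinuousLinearMap.id ℝ B)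
    (hUchain : ∀ ξ t s r, t ≤ s → s ≤ r → (U ξ t s).comp (U ξ s r) = U ξ t r)
    (hUDcompat : ∀ ξ t s f, ι (UD ξ t s f) = U ξ t s (ι f))
    (hUbdd : ∀ ξ, AdmCurve ι M T ξ → ∀ t s, 0 ≤ t → t ≤ s → s ≤ T → ‖U ξ t s‖ ≤ c₃)
    (hUDbdd : ∀ ξ, AdmCurve ι M T ξ → ∀ t s, 0 ≤ t → t ≤ s → s ≤ T → ‖UD ξ t s‖ ≤ c₂)
    (hUcont : ∀ ξ, AdmCurve ι M T ξ → ∀ v : B,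
      ContinuousOn (fun q : ℝ × ℝ => U ξ q.1 q.2 v)
        {q : ℝ × ℝ | 0 ≤ q.1 ∧ q.1 ≤ q.2 ∧ q.2 ≤ T})
    (hgen₁ : ∀ ξ, AdmCurve ι M T ξ → ∀ (f : D) (t : ℝ), t ∈ Icc (0:ℝ) T →
      ∀ s ∈ Icc t T,
      HasDerivWithinAt (fun r => U ξ t r (ι f)) (U ξ t s (A ξ s f)) (Icc t T) s)
    (hgen₂ : ∀ ξ, AdmCurve ι M T ξ → ∀ (f : D) (r : ℝ), r ∈ Icc (0:ℝ) T →
      ∀ s ∈ Icc (0:ℝ) r,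
      HasDerivWithinAt (fun q => U ξ q r (ι f)) (-(A ξ s (UD ξ s r f)))
        (Icc (0:ℝ) r) s)
    (hpres : ∀ ξ, AdmCurve ι M T ξ → ∀ t s, 0 ≤ t → t ≤ s → s ≤ T →
      ∀ ν ∈ M, ν.comp (U ξ t s) ∈ M)
    (hadapt : ∀ ξ η t, t ∈ Icc (0:ℝ) T → (∀ r ∈ Icc (0:ℝ) t, ξ r = η r) →
      U ξ 0 t = U η 0 t)
    (ξseq : ℕ → ℝ → StrongDual ℝ B)
    (hadm : ∀ n, AdmCurve ι M T (ξseq n))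
    (hzero : ∀ t, ξseq 0 t = μ)
    (hrec : ∀ n, ∀ t ∈ Icc (0:ℝ) T, ξseq (n + 1) t = μ.comp (U (ξseq n) 0 t)) :
    ∀ n : ℕ, 1 ≤ n → ∀ t ∈ Icc (0:ℝ) T, ∀ r ∈ Icc (0:ℝ) t,
      ‖embDual ι (ξseq n r) - embDual ι (ξseq (n - 1) r)‖ ≤
        (c₁ * c₂ * c₃ * K * t) ^ n / (n.factorial : ℝ) := by
  classical
  rcases subsingleton_or_nontrivial B with hss | hnt
  · -- degenerate case: `B` trivial, all dual elements coincide
    intro n hn t ht r hr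
    have hzero' : embDual ι (ξseq n r) = embDual ι (ξseq (n - 1) r) := by
      ext f
      have h0 : ι f = 0 := Subsingleton.elim _ _
      simp [embDual, h0]
    rw [hzero', sub_self, norm_zero]
    exact div_nonneg (pow_nonneg (mul_nonneg (by positivity) ht.1) n) (Nat.cast_nonneg _)
  · haveI := hnt
    have hμK : ‖μ‖ ≤ K := hMbdd μ hμ
    have hc₃1 : (1:ℝ) ≤ c₃ := by
      have h := hUbdd _ (hadm 0) 0 0 le_rfl le_rfl hT.le
      rw [hUid, ContinuousLinearMap.norm_id] at h
      exact h
    set C : ℝ := c₁ * c₂ * c₃ * K with hC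
    have hCpos : 0 < C := by rw [hC]; positivity
    -- Duhamel-type derivative of the interpolation path
    have key : ∀ (α ζ : ℝ → StrongDual ℝ B), AdmCurve ι M T α → AdmCurve ι M T ζ →
        ∀ (f : D) (r : ℝ), r ∈ Icc (0:ℝ) T → ∀ x ∈ Icc (0:ℝ) r,
        HasDerivWithinAt (fun q => μ (U α 0 q (U ζ q r (ι f))))
          (μ (U α 0 x (A α x (UD ζ x r f) - A ζ x (UD ζ x r f)))) (Icc (0:ℝ) r) x := by
      intro α ζ hα hζ f r hr x hx
      have hsub : Icc (0:ℝ) r ⊆ Icc (0:ℝ) T := Icc_subset_Icc le_rfl hr.2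
      set h₀ : D := UD ζ x r f with hh₀
      have hg : HasDerivWithinAt (fun q => U ζ q r (ι f)) (-(A ζ x (UD ζ x r f)))
          (Icc (0:ℝ) r) x := hgen₂ ζ hζ f r hr x hx
      have hgx : U ζ x r (ι f) = ι h₀ := (hUDcompat ζ x r f).symm
      have hf₁ : HasDerivWithinAt (fun q => μ (U α 0 q (ι h₀)))
          (μ (U α 0 x (A α x h₀))) (Icc (0:ℝ) r) x := by
        have h1 := (hgen₁ α hα h₀ 0 ⟨le_rfl, hT.le⟩ x (hsub hx)).mono hsub
        have h2 := μ.hasFDerivAt.comp_hasDerivWithinAt x h1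
        simpa [Function.comp_def] using h2
      have hUc : ∀ v : B, ContinuousOn (fun q => U α 0 q v) (Icc (0:ℝ) r) := by
        intro v
        have h2 : ContinuousOn (fun q : ℝ => (((0:ℝ), q) : ℝ × ℝ)) (Icc (0:ℝ) r) :=
          (continuous_const.prodMk continuous_id).continuousOn
        exact (hUcont α hα v).comp h2 (fun q hq => ⟨le_rfl, hq.1, hq.2.trans hr.2⟩)
      have hbd : ∀ q ∈ Icc (0:ℝ) r, ∀ w : B, ‖μ (U α 0 q w)‖ ≤ K * c₃ * ‖w‖ := by
        intro q hq w
        have h1 : ‖μ (U α 0 q w)‖ ≤ ‖μ‖ * ‖U α 0 q w‖ := μ.le_opNorm _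
        have h2 : ‖U α 0 q w‖ ≤ ‖U α 0 q‖ * ‖w‖ := (U α 0 q).le_opNorm w
        have h3 : ‖U α 0 q‖ ≤ c₃ := hUbdd α hα 0 q le_rfl hq.1 (hq.2.trans hr.2)
        calc ‖μ (U α 0 q w)‖ ≤ ‖μ‖ * ‖U α 0 q w‖ := h1
          _ ≤ K * (c₃ * ‖w‖) :=
              mul_le_mul hμK
                (h2.trans (mul_le_mul_of_nonneg_right h3 (norm_nonneg w)))
                (norm_nonneg _) hK.le
          _ = K * c₃ * ‖w‖ := (mul_assoc _ _ _).symm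
      set L : B := -(A ζ x (UD ζ x r f)) with hL
      have hf₂ : HasDerivWithinAt (fun q => μ (U α 0 q (U ζ q r (ι f) - ι h₀)))
          (μ (U α 0 x L)) (Icc (0:ℝ) r) x := by
        rw [hasDerivWithinAt_iff_isLittleO]
        have hE : (fun q => U ζ q r (ι f) - ι h₀ - (q - x) • L)
            =o[nhdsWithin x (Icc (0:ℝ) r)] (fun q => q - x) := by
          have h := hasDerivWithinAt_iff_isLittleO.1 hg
          rw [hgx] at h
          exact h
        have hA : (fun q => μ (U α 0 q (U ζ q r (ι f) - ι h₀ - (q - x) • L)))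
            =o[nhdsWithin x (Icc (0:ℝ) r)] (fun q => q - x) := by
          refine Asymptotics.IsBigO.trans_isLittleO ?_ hE
          rw [Asymptotics.isBigO_iff]
          refine ⟨K * c₃, ?_⟩
          filter_upwards [self_mem_nhdsWithin] with q hq
          exact hbd q hq _
        have hDt : Filter.Tendsto (fun q => μ (U α 0 q L) - μ (U α 0 x L))
            (nhdsWithin x (Icc (0:ℝ) r)) (nhds 0) := by
          have hcw := (μ.continuous.comp_continuousOn (hUc L)) x hx
          have h3 : Filter.Tendsto (fun q => μ (U α 0 q L)) (nhdsWithin x (Icc (0:ℝ) r))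
              (nhds (μ (U α 0 x L))) := hcw
          have h4 := h3.sub_const (μ (U α 0 x L))
          simpa using h4
        have hB2 : (fun q => (q - x) • (μ (U α 0 q L) - μ (U α 0 x L)))
            =o[nhdsWithin x (Icc (0:ℝ) r)] (fun q => q - x) := by
          have h1 : (fun q => μ (U α 0 q L) - μ (U α 0 x L))
              =o[nhdsWithin x (Icc (0:ℝ) r)] (fun _ => (1:ℝ)) :=
            (Asymptotics.isLittleO_one_iff ℝ).2 hDt
          have h2 := h1.mul_isBigO
            (Asymptotics.isBigO_refl (fun q => q - x) (nhdsWithin x (Icc (0:ℝ) r)))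
          simpa [smul_eq_mul, mul_comm, one_mul] using h2
        have hfx : μ (U α 0 x (U ζ x r (ι f) - ι h₀)) = 0 := by
          rw [hgx, sub_self, map_zero, map_zero]
        have hident : ∀ q, μ (U α 0 q (U ζ q r (ι f) - ι h₀))
              - μ (U α 0 x (U ζ x r (ι f) - ι h₀)) - (q - x) • μ (U α 0 x L)
            = μ (U α 0 q (U ζ q r (ι f) - ι h₀ - (q - x) • L))
              + (q - x) • (μ (U α 0 q L) - μ (U α 0 x L)) := by
          intro q
          rw [hfx]
          simp only [_root_.map_sub, _root_.map_smul, smul_eq_mul]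
          ring
        simp only [hident]
        exact hA.add hB2
      have hsum := hf₁.add hf₂
      have hfun : (fun q => μ (U α 0 q (ι h₀)) + μ (U α 0 q (U ζ q r (ι f) - ι h₀)))
          = (fun q => μ (U α 0 q (U ζ q r (ι f)))) := by
        have harg : ∀ q : ℝ, ι h₀ + (U ζ q r (ι f) - ι h₀) = U ζ q r (ι f) :=
          fun q => by abel
        funext q
        rw [← map_add, ← map_add, harg]
      have hval : μ (U α 0 x (A α x h₀)) + μ (U α 0 x L)
          = μ (U α 0 x (A α x (UD ζ x r f) - A ζ x (UD ζ x r f))) := by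
        have harg2 : A α x h₀ + L = A α x (UD ζ x r f) - A ζ x (UD ζ x r f) := by
          rw [hL, ← hh₀]
          abel
        rw [← map_add, ← map_add, harg2]
      rw [← hfun, ← hval]
      exact hsum
    -- The key quantitative step (one Picard iteration)
    have step : ∀ (m : ℕ) (η ζ : ℝ → StrongDual ℝ B), AdmCurve ι M T η → AdmCurve ι M T ζ →
        (∀ s ∈ Icc (0:ℝ) T,
          ‖embDual ι (η s) - embDual ι (ζ s)‖ ≤ (C * s) ^ m / (m.factorial : ℝ)) →
        ∀ r ∈ Icc (0:ℝ) T, ∀ f : D,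
          ‖μ (U η 0 r (ι f)) - μ (U ζ 0 r (ι f))‖
            ≤ (C * r) ^ (m + 1) / ((m + 1).factorial : ℝ) * ‖f‖ := by
      intro m η ζ hη hζ hb r hr f
      set E : ℝ := K * c₃ * c₁ * c₂ * ‖f‖ / (m.factorial : ℝ) with hE
      set h : ℝ → ℝ := fun q => μ (U η 0 q (U ζ q r (ι f))) with hhdef
      set F' : ℝ → ℝ :=
        fun x => μ (U η 0 x (A η x (UD ζ x r f) - A ζ x (UD ζ x r f))) with hF'
      have hcont : ContinuousOn h (Icc (0:ℝ) r) :=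
        fun x hx => (key η ζ hη hζ f r hr x hx).continuousWithinAt
      have hder : ∀ x ∈ Ico (0:ℝ) r, HasDerivWithinAt h (F' x) (Ici x) x :=
        fun x hx => (key η ζ hη hζ f r hr x (Ico_subset_Icc_self hx)).mono_of_mem_nhdsWithin
          (Icc_mem_nhdsGE_of_mem hx)
      have hFbound : ∀ x ∈ Ico (0:ℝ) r, ‖F' x‖ ≤ E * (C * x) ^ m := by
        intro x hx
        have hεb : ∀ ε : ℝ, 0 < ε → ‖F' x‖ ≤ E * (C * (x + ε)) ^ m := by
          intro ε hε
          set a : ℝ := min (x + ε / 2) r with ha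
          have hxa : x < a := lt_min (by linarith) hx.2
          have har : a ≤ r := min_le_right _ _
          have haxε : a ≤ x + ε / 2 := min_le_left _ _
          set lam : ℝ → ℝ := fun s => max 0 (min 1 ((a + ε / 2 - s) / (ε / 2))) with hlam
          have hlam0le : ∀ s, 0 ≤ lam s := fun s => le_max_left _ _
          have hlamle1 : ∀ s, lam s ≤ 1 :=
            fun s => max_le (by norm_num) (min_le_left _ _)
          have hlam1 : ∀ s, s ≤ a → lam s = 1 := by
            intro s hs
            have h1 : (1:ℝ) ≤ (a + ε / 2 - s) / (ε / 2) := by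
              rw [le_div_iff₀ (by linarith)]
              linarith
            rw [hlam]
            simp only [min_eq_left h1]
            exact max_eq_right (by norm_num)
          have hlam0 : ∀ s, a + ε / 2 ≤ s → lam s = 0 := by
            intro s hs
            have h1 : (a + ε / 2 - s) / (ε / 2) ≤ 0 :=
              div_nonpos_of_nonpos_of_nonneg (by linarith) (by linarith)
            rw [hlam]
            exact max_eq_left (le_trans (min_le_right _ _) h1)
          set α : ℝ → StrongDual ℝ B := fun s => lam s • η s + (1 - lam s) • ζ s with hαdef
          have hαeta : ∀ s, s ≤ a → α s = η s := by
            intro s hs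
            rw [hαdef]
            simp [hlam1 s hs]
          have hαM : AdmCurve ι M T α := by
            constructor
            · intro s hs
              exact hMconv (hη.1 s hs) (hζ.1 s hs) (hlam0le s)
                (by linarith [hlamle1 s]) (by ring)
            · have hemb : ∀ s, embDual ι (α s)
                  = lam s • embDual ι (η s) + (1 - lam s) • embDual ι (ζ s) := by
                intro s
                simp [embDual, hαdef, ContinuousLinearMap.add_comp,
                  ContinuousLinearMap.smul_comp]
              rw [show (fun t => embDual ι (α t))
                  = fun t => lam t • embDual ι (η t) + (1 - lam t) • embDual ι (ζ t)
                from funext hemb]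
              have hlamc : Continuous lam := by
                apply Continuous.max continuous_const
                apply Continuous.min continuous_const
                exact (continuous_const.sub continuous_id).div_const _
              exact (hlamc.continuousOn.smul hη.2).add
                ((continuous_const.sub hlamc).continuousOn.smul hζ.2)
          have hUeq : ∀ q ∈ Icc (0:ℝ) a, U α 0 q = U η 0 q := by
            intro q hq
            exact hadapt α η q ⟨hq.1, hq.2.trans (har.trans hr.2)⟩
              (fun s hs => hαeta s (hs.2.trans hq.2))
          have e1 : HasDerivWithinAt h
              (μ (U α 0 x (A α x (UD ζ x r f) - A ζ x (UD ζ x r f)))) (Ici x) x := by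
            have k1 := (key α ζ hαM hζ f r hr x ⟨hx.1, hx.2.le⟩).mono
              (Icc_subset_Icc le_rfl har)
            have k2 : HasDerivWithinAt h
                (μ (U α 0 x (A α x (UD ζ x r f) - A ζ x (UD ζ x r f)))) (Icc 0 a) x := by
              refine k1.congr (fun q hq => ?_) ?_
              · show μ (U η 0 q (U ζ q r (ι f))) = μ (U α 0 q (U ζ q r (ι f)))
                rw [hUeq q hq]
              · show μ (U η 0 x (U ζ x r (ι f))) = μ (U α 0 x (U ζ x r (ι f)))
                rw [hUeq x ⟨hx.1, hxa.le⟩]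
            exact k2.mono_of_mem_nhdsWithin (Icc_mem_nhdsGE_of_mem ⟨hx.1, hxa⟩)
          have e2 : HasDerivWithinAt h (F' x) (Ici x) x := hder x hx
          have huniq : F' x
              = μ (U α 0 x (A α x (UD ζ x r f) - A ζ x (UD ζ x r f))) :=
            UniqueDiffWithinAt.eq_deriv _ (uniqueDiffOn_Ici x x self_mem_Ici) e2 e1
          rw [huniq]
          have hxT : x ∈ Icc (0:ℝ) T := ⟨hx.1, hx.2.le.trans hr.2⟩
          have hsupb : (⨆ s : Icc (0:ℝ) T,
                ‖embDual ι (α (s:ℝ)) - embDual ι (ζ (s:ℝ))‖)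
              ≤ (C * (x + ε)) ^ m / (m.factorial : ℝ) := by
            haveI : Nonempty (Icc (0:ℝ) T) := ⟨⟨0, le_rfl, hT.le⟩⟩
            apply ciSup_le
            rintro ⟨s, hs⟩
            have hrepr : embDual ι (α s) - embDual ι (ζ s)
                = lam s • (embDual ι (η s) - embDual ι (ζ s)) := by
              have h1 : α s - ζ s = lam s • (η s - ζ s) := by
                rw [hαdef]; simp only; module
              have h2 : embDual ι (α s) - embDual ι (ζ s) = embDual ι (α s - ζ s) := by
                simp [embDual, ContinuousLinearMap.sub_comp]
              rw [h2, h1]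
              simp [embDual, ContinuousLinearMap.smul_comp, ContinuousLinearMap.sub_comp]
            rw [hrepr, norm_smul]
            rcases le_or_gt s (a + ε / 2) with hs1 | hs1
            · have h1 : ‖embDual ι (η s) - embDual ι (ζ s)‖
                  ≤ (C * s) ^ m / (m.factorial : ℝ) := hb s hs
              have hsxε : C * s ≤ C * (x + ε) := by
                apply mul_le_mul_of_nonneg_left _ hCpos.le
                linarith
              have h2 : (C * s) ^ m ≤ (C * (x + ε)) ^ m :=
                pow_le_pow_left₀ (mul_nonneg hCpos.le hs.1) hsxε m
              calc ‖lam s‖ * ‖embDual ι (η s) - embDual ι (ζ s)‖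
                  ≤ 1 * ((C * s) ^ m / (m.factorial : ℝ)) := by
                    apply mul_le_mul _ h1 (norm_nonneg _) (by norm_num)
                    rw [Real.norm_eq_abs, abs_of_nonneg (hlam0le s)]
                    exact hlamle1 s
                _ ≤ (C * (x + ε)) ^ m / (m.factorial : ℝ) := by
                    rw [one_mul]
                    gcongr
            · rw [hlam0 s hs1.le]
              simp only [norm_zero, zero_mul]
              have hCx : (0:ℝ) ≤ C * (x + ε) :=
                mul_nonneg hCpos.le (by linarith [hx.1])
              exact div_nonneg (pow_nonneg hCx m) (Nat.cast_nonneg _)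
          have hAx : ‖A α x - A ζ x‖
              ≤ c₁ * ((C * (x + ε)) ^ m / (m.factorial : ℝ)) :=
            le_trans (hAlip α ζ hαM hζ x hxT)
              (mul_le_mul_of_nonneg_left hsupb hc₁.le)
          have hUDb : ‖UD ζ x r f‖ ≤ c₂ * ‖f‖ :=
            le_trans ((UD ζ x r).le_opNorm f)
              (mul_le_mul_of_nonneg_right (hUDbdd ζ hζ x r hx.1 hx.2.le hr.2)
                (norm_nonneg f))
          have happ : ‖A α x (UD ζ x r f) - A ζ x (UD ζ x r f)‖
              ≤ c₁ * ((C * (x + ε)) ^ m / (m.factorial : ℝ)) * (c₂ * ‖f‖) := by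
            rw [← ContinuousLinearMap.sub_apply]
            have hCx : (0:ℝ) ≤ C * (x + ε) :=
              mul_nonneg hCpos.le (by linarith [hx.1])
            exact le_trans ((A α x - A ζ x).le_opNorm _)
              (mul_le_mul hAx hUDb (norm_nonneg _)
                (mul_nonneg hc₁.le (div_nonneg (pow_nonneg hCx m) (Nat.cast_nonneg _))))
          have hμU : ‖μ (U α 0 x (A α x (UD ζ x r f) - A ζ x (UD ζ x r f)))‖
              ≤ K * (c₃ * ‖A α x (UD ζ x r f) - A ζ x (UD ζ x r f)‖) := by
            refine le_trans (μ.le_opNorm _) (mul_le_mul hμK ?_ (norm_nonneg _) hK.le)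
            exact le_trans ((U α 0 x).le_opNorm _)
              (mul_le_mul_of_nonneg_right
                (hUbdd α hαM 0 x le_rfl hx.1 (hx.2.le.trans hr.2)) (norm_nonneg _))
          calc ‖μ (U α 0 x (A α x (UD ζ x r f) - A ζ x (UD ζ x r f)))‖
              ≤ K * (c₃ * ‖A α x (UD ζ x r f) - A ζ x (UD ζ x r f)‖) := hμU
            _ ≤ K * (c₃ * (c₁ * ((C * (x + ε)) ^ m / (m.factorial : ℝ)) * (c₂ * ‖f‖))) := by
                gcongr
            _ = E * (C * (x + ε)) ^ m := by rw [hE]; ring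
        have ht2 : Filter.Tendsto (fun ε : ℝ => E * (C * (x + ε)) ^ m)
            (nhdsWithin 0 (Ioi (0:ℝ))) (nhds (E * (C * (x + 0)) ^ m)) := by
          apply Filter.Tendsto.mono_left _ nhdsWithin_le_nhds
          exact (Continuous.tendsto (by continuity) 0)
        have h3 := ge_of_tendsto ht2
          (by filter_upwards [self_mem_nhdsWithin] with ε hε; exact hεb ε hε)
        simpa using h3
      -- the fencing / Gronwall argument
      have hBder : ∀ x : ℝ, HasDerivAt (fun q : ℝ => E * C ^ m / ((m:ℝ) + 1) * q ^ (m + 1))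
          (E * (C * x) ^ m) x := by
        intro x
        have hd := (hasDerivAt_pow (m + 1) x).const_mul (E * C ^ m / ((m:ℝ) + 1))
        have hm1 : ((m:ℝ) + 1) ≠ 0 := by positivity
        refine hd.congr_deriv ?_
        rw [Nat.add_sub_cancel, mul_pow]
        push_cast
        field_simp
        ring
      have hmvt := image_norm_le_of_norm_deriv_right_le_deriv_boundary
        (f := fun q => h q - h 0) (f' := F') (a := 0) (b := r)
        (hcont.sub continuousOn_const)
        (fun x hx => (hder x hx).sub_const _)
        (B := fun q : ℝ => E * C ^ m / ((m:ℝ) + 1) * q ^ (m + 1))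
        (B' := fun q : ℝ => E * (C * q) ^ m)
        (by simp) hBder hFbound
      have h2 := hmvt (right_mem_Icc.2 hr.1)
      have hrval : h r = μ (U η 0 r (ι f)) := by
        rw [hhdef]
        simp [hUid]
      have hr0 : h 0 = μ (U ζ 0 r (ι f)) := by
        rw [hhdef]
        simp [hUid]
      rw [hrval, hr0] at h2
      refine le_trans h2 (le_of_eq ?_)
      rw [hE, Nat.factorial_succ]
      push_cast
      field_simp
      ring
    -- The Picard iteration bound, pointwise in time
    have Q : ∀ m : ℕ, ∀ s ∈ Icc (0:ℝ) T,
        ‖embDual ι (ξseq (m + 1) s) - embDual ι (ξseq m s)‖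
          ≤ (C * s) ^ (m + 1) / ((m + 1).factorial : ℝ) := by
      intro m
      induction m with
      | zero =>
        intro s hs
        apply ContinuousLinearMap.opNorm_le_bound _
          (div_nonneg (pow_nonneg (mul_nonneg hCpos.le hs.1) _) (Nat.cast_nonneg _))
        intro f
        have hval : (embDual ι (ξseq 1 s) - embDual ι (ξseq 0 s)) f
            = μ (U (ξseq 0) 0 s (ι f)) - μ (ι f) := by
          rw [hrec 0 s hs, hzero s]
          simp [embDual]
        rw [hval]
        have key0 : ∀ x ∈ Icc (0:ℝ) s,
            HasDerivWithinAt (fun q => μ (U (ξseq 0) q s (ι f)))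
              (μ (-(A (ξseq 0) x (UD (ξseq 0) x s f)))) (Icc (0:ℝ) s) x := by
          intro x hx
          have h1 := hgen₂ (ξseq 0) (hadm 0) f s hs x hx
          have h2 := μ.hasFDerivAt.comp_hasDerivWithinAt x h1
          simpa [Function.comp_def] using h2
        have hbound : ∀ x ∈ Ico (0:ℝ) s,
            ‖μ (-(A (ξseq 0) x (UD (ξseq 0) x s f)))‖ ≤ K * (c₁ * (c₂ * ‖f‖)) := by
          intro x hx
          have h1 : ‖μ (-(A (ξseq 0) x (UD (ξseq 0) x s f)))‖
              ≤ ‖μ‖ * ‖A (ξseq 0) x (UD (ξseq 0) x s f)‖ := by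
            rw [map_neg, norm_neg]
            exact μ.le_opNorm _
          have h2 : ‖A (ξseq 0) x (UD (ξseq 0) x s f)‖
              ≤ c₁ * (c₂ * ‖f‖) := by
            refine le_trans ((A (ξseq 0) x).le_opNorm _) ?_
            have h3 : ‖A (ξseq 0) x‖ ≤ c₁ :=
              hAbdd _ (hadm 0) x ⟨hx.1, hx.2.le.trans hs.2⟩
            have h4 : ‖UD (ξseq 0) x s f‖ ≤ c₂ * ‖f‖ :=
              le_trans ((UD (ξseq 0) x s).le_opNorm f)
                (mul_le_mul_of_nonneg_right (hUDbdd _ (hadm 0) x s hx.1 hx.2.le hs.2)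
                  (norm_nonneg f))
            exact mul_le_mul h3 h4 (norm_nonneg _) hc₁.le
          calc ‖μ (-(A (ξseq 0) x (UD (ξseq 0) x s f)))‖
              ≤ ‖μ‖ * ‖A (ξseq 0) x (UD (ξseq 0) x s f)‖ := h1
            _ ≤ K * (c₁ * (c₂ * ‖f‖)) :=
                mul_le_mul hμK h2 (norm_nonneg _) hK.le
        have hmvt0 := norm_image_sub_le_of_norm_deriv_le_segment' key0 hbound s
          (right_mem_Icc.2 hs.1)
        have hss : U (ξseq 0) s s (ι f) = ι f := by rw [hUid]; rfl
        rw [hss] at hmvt0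
        have h5 : ‖μ (U (ξseq 0) 0 s (ι f)) - μ (ι f)‖
            ≤ K * (c₁ * (c₂ * ‖f‖)) * (s - 0) := by
          rw [norm_sub_rev]
          exact hmvt0
        refine le_trans h5 ?_
        have hs0 : (0:ℝ) ≤ s := hs.1
        have hf0 : (0:ℝ) ≤ ‖f‖ := norm_nonneg f
        rw [hC]
        simp only [zero_add, pow_one, Nat.factorial_one, Nat.cast_one, div_one]
        nlinarith [mul_nonneg (mul_nonneg (mul_nonneg (mul_nonneg
          (sub_nonneg.2 hc₃1) hK.le) hc₁.le) hc₂.le) (mul_nonneg hs0 hf0)]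
      | succ m ih =>
        intro s hs
        apply ContinuousLinearMap.opNorm_le_bound _
          (div_nonneg (pow_nonneg (mul_nonneg hCpos.le hs.1) _) (Nat.cast_nonneg _))
        intro f
        have hval : (embDual ι (ξseq (m + 1 + 1) s) - embDual ι (ξseq (m + 1) s)) f
            = μ (U (ξseq (m + 1)) 0 s (ι f)) - μ (U (ξseq m) 0 s (ι f)) := by
          rw [hrec (m + 1) s hs, hrec m s hs]
          simp [embDual]
        rw [hval]
        exact step (m + 1) (ξseq (m + 1)) (ξseq m) (hadm _) (hadm _) ih s hs f
    -- conclude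
    intro n hn t ht r hr
    obtain ⟨m, rfl⟩ : ∃ m, n = m + 1 := ⟨n - 1, (Nat.succ_pred_eq_of_pos hn).symm⟩
    simp only [Nat.add_sub_cancel]
    have hrT : r ∈ Icc (0:ℝ) T := ⟨hr.1, hr.2.trans ht.2⟩
    refine le_trans (Q m r hrT) ?_
    have hpow : (C * r) ^ (m + 1) ≤ (C * t) ^ (m + 1) :=
      pow_le_pow_left₀ (mul_nonneg hCpos.le hr.1)
        (mul_le_mul_of_nonneg_left hr.2 hCpos.le) _
    have hfac : (0:ℝ) < ((m + 1).factorial : ℝ) := by positivity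
    exact div_le_div_of_nonneg_right hpow hfac.le
end
end

section
/- (Nonlinear Lipschitz dependence combining propagator perturbation and initial-data stability.) Under the standing assumptions (generators Lipschitz with constant c₁ in the sup-D*-metric on curves, propagator bounds ‖U^{t,s}[ξ]‖_{D→D} ≤ c₂ and ‖U^{t,s}[ξ]‖_{B→B} ≤ c₃, measures bounded by K in B*), any two solutions μ_t = Ũ^{t,0}[{μ_·}]μ and η_t = Ũ^{t,0}[{η_·}]η of the path-dependent kinetic equation satisfy the a priori inequality sup_{t∈[0,T]}‖μ_t − η_t‖_{D*} ≤ c₁c₂c₃TK · sup_{t∈[0,T]}‖μ_t − η_t‖_{D*} + c₂‖μ − η‖_{D*}, obtained from the decomposition μ_t − η_t = (Ũ^{t,0}[{μ_·}] − Ũ^{t,0}[{η_·}])μ + Ũ^{t,0}[{η_·}](μ − η). -/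
set_option autoImplicit false

open MeasureTheory Set NormedSpace Filter Topology

noncomputable section

set_option maxHeartbeats 1000000 in
/-- the a priori inequality for two solutions of the path-dependent
kinetic equation:
`sup_t‖μ_t − η_t‖_{D*} ≤ c₁c₂c₃TK·sup_t‖μ_t − η_t‖_{D*} + c₂‖μ − η‖_{D*}`. -/
theorem stmt19
    {B D : Type*} [NormedAddCommGroup B] [NormedSpace ℝ B] [CompleteSpace B]
    [NormedAddCommGroup D] [NormedSpace ℝ D] [CompleteSpace D]
    (ι : D →L[ℝ] B) (hιdense : DenseRange ι) (hιnorm : ∀ f : D, ‖ι f‖ ≤ ‖f‖)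
    (T K c₁ c₂ c₃ : ℝ) (hT : 0 < T) (hK : 0 < K)
    (hc₁ : 0 < c₁) (hc₂ : 0 < c₂) (hc₃ : 0 < c₃)
    (M : Set (StrongDual ℝ B)) (hMne : M.Nonempty) (hMconv : Convex ℝ M)
    (hMbdd : ∀ ν ∈ M, ‖ν‖ ≤ K) (hMclB : IsClosed M)
    (hMclD : IsClosed (embDual ι '' M))
    (μ : StrongDual ℝ B) (hμ : μ ∈ M)
    (A : (ℝ → StrongDual ℝ B) → ℝ → (D →L[ℝ] B))
    (U : (ℝ → StrongDual ℝ B) → ℝ → ℝ → (B →L[ℝ] B))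
    (UD : (ℝ → StrongDual ℝ B) → ℝ → ℝ → (D →L[ℝ] D))
    (hAbdd : ∀ ξ, AdmCurve ι M T ξ → ∀ t ∈ Icc (0:ℝ) T, ‖A ξ t‖ ≤ c₁)
    (hAlip : ∀ ξ η, AdmCurve ι M T ξ → AdmCurve ι M T η → ∀ t ∈ Icc (0:ℝ) T,
      ‖A ξ t - A η t‖ ≤
        c₁ * ⨆ s : Icc (0:ℝ) T, ‖embDual ι (ξ (s:ℝ)) - embDual ι (η (s:ℝ))‖)
    (hUid : ∀ ξ t, U ξ t t = ContinuousLinearMap.id ℝ B)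
    (hUchain : ∀ ξ t s r, t ≤ s → s ≤ r → (U ξ t s).comp (U ξ s r) = U ξ t r)
    (hUDcompat : ∀ ξ t s f, ι (UD ξ t s f) = U ξ t s (ι f))
    (hUbdd : ∀ ξ, AdmCurve ι M T ξ → ∀ t s, 0 ≤ t → t ≤ s → s ≤ T → ‖U ξ t s‖ ≤ c₃)
    (hUDbdd : ∀ ξ, AdmCurve ι M T ξ → ∀ t s, 0 ≤ t → t ≤ s → s ≤ T → ‖UD ξ t s‖ ≤ c₂)
    (hUcont : ∀ ξ, AdmCurve ι M T ξ → ∀ v : B,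
      ContinuousOn (fun q : ℝ × ℝ => U ξ q.1 q.2 v)
        {q : ℝ × ℝ | 0 ≤ q.1 ∧ q.1 ≤ q.2 ∧ q.2 ≤ T})
    (hgen₁ : ∀ ξ, AdmCurve ι M T ξ → ∀ (f : D) (t : ℝ), t ∈ Icc (0:ℝ) T →
      ∀ s ∈ Icc t T,
      HasDerivWithinAt (fun r => U ξ t r (ι f)) (U ξ t s (A ξ s f)) (Icc t T) s)
    (hgen₂ : ∀ ξ, AdmCurve ι M T ξ → ∀ (f : D) (r : ℝ), r ∈ Icc (0:ℝ) T →
      ∀ s ∈ Icc (0:ℝ) r,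
      HasDerivWithinAt (fun q => U ξ q r (ι f)) (-(A ξ s (UD ξ s r f)))
        (Icc (0:ℝ) r) s)
    (hpres : ∀ ξ, AdmCurve ι M T ξ → ∀ t s, 0 ≤ t → t ≤ s → s ≤ T →
      ∀ ν ∈ M, ν.comp (U ξ t s) ∈ M)
 :
    ∀ η, η ∈ M → ∀ ξc ηc, AdmCurve ι M T ξc → AdmCurve ι M T ηc →
    ξc 0 = μ → ηc 0 = η →
    (∀ t ∈ Icc (0:ℝ) T, ξc t = μ.comp (U ξc 0 t)) →
    (∀ t ∈ Icc (0:ℝ) T, ηc t = η.comp (U ηc 0 t)) →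
    (⨆ t : Icc (0:ℝ) T, ‖embDual ι (ξc (t:ℝ)) - embDual ι (ηc (t:ℝ))‖) ≤
      c₁ * c₂ * c₃ * T * K *
        (⨆ t : Icc (0:ℝ) T, ‖embDual ι (ξc (t:ℝ)) - embDual ι (ηc (t:ℝ))‖) +
      c₂ * ‖embDual ι (μ - η)‖ := by
  intro η hη ξc ηc hξadm hηadm hξ0 hη0 hξsol hηsol
  have hT0 : (0:ℝ) ≤ T := hT.le
  haveI : Nonempty (Icc (0:ℝ) T) := ⟨⟨0, le_refl _, hT0⟩⟩
  set S := (⨆ t : Icc (0:ℝ) T, ‖embDual ι (ξc (t:ℝ)) - embDual ι (ηc (t:ℝ))‖) with hS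
  have hSnn : 0 ≤ S := Real.iSup_nonneg (fun t => norm_nonneg _)
  -- key estimate on the difference of propagators
  have key : ∀ t ∈ Icc (0:ℝ) T, ∀ f : D,
      ‖U ξc 0 t (ι f) - U ηc 0 t (ι f)‖ ≤ c₃ * (c₁ * S) * (c₂ * ‖f‖) * T := by
    intro t ht f
    set g : ℝ → B := fun s => U ξc 0 s (U ηc s t (ι f)) with hg
    set d : ℝ → B := fun s => U ξc 0 s ((A ξc s - A ηc s) (UD ηc s t f)) with hd
    have hsubT : Icc (0:ℝ) t ⊆ Icc (0:ℝ) T := Icc_subset_Icc le_rfl ht.2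
    have hderiv : ∀ s ∈ Icc (0:ℝ) t, HasDerivWithinAt g (d s) (Icc (0:ℝ) t) s := by
      intro s hs
      set h : D := UD ηc s t f with hh
      have hιh : ι h = U ηc s t (ι f) := hUDcompat ηc s t f
      -- first piece
      have hF : HasDerivWithinAt (fun s' => U ξc 0 s' (ι h))
          (U ξc 0 s (A ξc s h)) (Icc (0:ℝ) t) s :=
        (hgen₁ ξc hξadm h 0 ⟨le_rfl, hT0⟩ s (hsubT hs)).mono hsubT
      -- second piece
      have hk : HasDerivWithinAt (fun q => U ηc q t (ι f))
          (-(A ηc s (UD ηc s t f))) (Icc (0:ℝ) t) s :=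
        hgen₂ ηc hηadm f t ht s hs
      have hR : HasDerivWithinAt
          (fun s' => U ξc 0 s' (U ηc s' t (ι f) - ι h))
          (U ξc 0 s (-(A ηc s h))) (Icc (0:ℝ) t) s := by
        rw [hasDerivWithinAt_iff_tendsto_slope]
        have hkk := hasDerivWithinAt_iff_tendsto_slope.1 hk
        set w : B := -(A ηc s (UD ηc s t f)) with hw
        have hslope_eq : ∀ s' : ℝ,
            slope (fun s' => U ξc 0 s' (U ηc s' t (ι f) - ι h)) s s'
              = U ξc 0 s' (slope (fun q => U ηc q t (ι f)) s s') := by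
          intro s'
          simp only [slope_def_module, hιh, sub_self, map_zero, sub_zero, _root_.map_smul]
        have hmem : ∀ᶠ s' in 𝓝[Icc (0:ℝ) t \ {s}] s, s' ∈ Icc (0:ℝ) t := by
          filter_upwards [self_mem_nhdsWithin] with s' hs' using hs'.1
        -- term 2 : strong continuity
        have h2 : Tendsto (fun s' => U ξc 0 s' w) (𝓝[Icc (0:ℝ) t \ {s}] s)
            (𝓝 (U ξc 0 s w)) := by
          have hc : ContinuousWithinAt (fun q : ℝ × ℝ => U ξc q.1 q.2 w)
              {q : ℝ × ℝ | 0 ≤ q.1 ∧ q.1 ≤ q.2 ∧ q.2 ≤ T} ((0:ℝ), s) :=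
            (hUcont ξc hξadm w) ((0:ℝ), s) ⟨le_rfl, hs.1, le_trans hs.2 ht.2⟩
          have hmap : Tendsto (fun s' : ℝ => ((0:ℝ), s')) (𝓝[Icc (0:ℝ) t \ {s}] s)
              (𝓝[{q : ℝ × ℝ | 0 ≤ q.1 ∧ q.1 ≤ q.2 ∧ q.2 ≤ T}] ((0:ℝ), s)) := by
            apply tendsto_nhdsWithin_of_tendsto_nhds_of_eventually_within
            · exact (Continuous.tendsto (continuous_const.prodMk continuous_id) s).mono_left nhdsWithin_le_nhds
            · filter_upwards [hmem] with s' hs'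
              exact ⟨le_rfl, hs'.1, le_trans hs'.2 ht.2⟩
          exact hc.tendsto.comp hmap
        -- term 1 : goes to zero
        have h1 : Tendsto (fun s' => U ξc 0 s'
              (slope (fun q => U ηc q t (ι f)) s s' - w))
            (𝓝[Icc (0:ℝ) t \ {s}] s) (𝓝 0) := by
          apply squeeze_zero_norm' (a := fun s' =>
            c₃ * ‖slope (fun q => U ηc q t (ι f)) s s' - w‖)
          · filter_upwards [hmem] with s' hs'
            have hUb : ‖U ξc 0 s'‖ ≤ c₃ :=
              hUbdd ξc hξadm 0 s' le_rfl hs'.1 (le_trans hs'.2 ht.2)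
            calc ‖U ξc 0 s' (slope (fun q => U ηc q t (ι f)) s s' - w)‖
                ≤ ‖U ξc 0 s'‖ * ‖slope (fun q => U ηc q t (ι f)) s s' - w‖ :=
                  (U ξc 0 s').le_opNorm _
              _ ≤ c₃ * ‖slope (fun q => U ηc q t (ι f)) s s' - w‖ := by
                  gcongr
          · have hlim : Tendsto (fun s' => slope (fun q => U ηc q t (ι f)) s s' - w)
                (𝓝[Icc (0:ℝ) t \ {s}] s) (𝓝 (w - w)) :=
              hkk.sub tendsto_const_nhds
            rw [sub_self] at hlim
            simpa using hlim.norm.const_mul c₃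
        have hcomb : Tendsto (fun s' => U ξc 0 s'
              (slope (fun q => U ηc q t (ι f)) s s' - w) + U ξc 0 s' w)
            (𝓝[Icc (0:ℝ) t \ {s}] s) (𝓝 (0 + U ξc 0 s w)) := h1.add h2
        rw [zero_add] at hcomb
        have : (fun s' => U ξc 0 s'
              (slope (fun q => U ηc q t (ι f)) s s' - w) + U ξc 0 s' w)
            = fun s' => slope (fun s' => U ξc 0 s' (U ηc s' t (ι f) - ι h)) s s' := by
          funext s'
          rw [hslope_eq s', map_sub, sub_add_cancel]
        rw [this] at hcomb
        exact hcomb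
      -- combine
      have hgeq : g = fun s' => U ξc 0 s' (ι h)
          + U ξc 0 s' (U ηc s' t (ι f) - ι h) := by
        funext s'
        rw [← map_add, add_sub_cancel]
      have hdeq : d s = U ξc 0 s (A ξc s h) + U ξc 0 s (-(A ηc s h)) := by
        show U ξc 0 s ((A ξc s - A ηc s) (UD ηc s t f)) = _
        rw [ContinuousLinearMap.sub_apply, map_sub, map_neg, sub_eq_add_neg]
      rw [hgeq, hdeq]
      exact hF.add hR
    -- bound the derivative
    have hbound : ∀ s ∈ Icc (0:ℝ) t, ‖d s‖ ≤ c₃ * (c₁ * S) * (c₂ * ‖f‖) := by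
      intro s hs
      have hsT : s ∈ Icc (0:ℝ) T := hsubT hs
      have hUb : ‖U ξc 0 s‖ ≤ c₃ := hUbdd ξc hξadm 0 s le_rfl hs.1 hsT.2
      have hAb : ‖A ξc s - A ηc s‖ ≤ c₁ * S := hAlip ξc ηc hξadm hηadm s hsT
      have hUDb : ‖UD ηc s t f‖ ≤ c₂ * ‖f‖ := by
        calc ‖UD ηc s t f‖ ≤ ‖UD ηc s t‖ * ‖f‖ := (UD ηc s t).le_opNorm f
          _ ≤ c₂ * ‖f‖ := by gcongr; exact hUDbdd ηc hηadm s t hs.1 hs.2 ht.2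
      calc ‖d s‖ ≤ ‖U ξc 0 s‖ * ‖(A ξc s - A ηc s) (UD ηc s t f)‖ :=
            (U ξc 0 s).le_opNorm _
        _ ≤ c₃ * (‖A ξc s - A ηc s‖ * ‖UD ηc s t f‖) :=
            mul_le_mul hUb ((A ξc s - A ηc s).le_opNorm _) (norm_nonneg _) hc₃.le
        _ ≤ c₃ * ((c₁ * S) * (c₂ * ‖f‖)) :=
            mul_le_mul_of_nonneg_left
              (mul_le_mul hAb hUDb (norm_nonneg _)
                (mul_nonneg hc₁.le hSnn)) hc₃.le
        _ = c₃ * (c₁ * S) * (c₂ * ‖f‖) := by ring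
    have hmv := (convex_Icc (0:ℝ) t).norm_image_sub_le_of_norm_hasDerivWithin_le
      hderiv hbound (left_mem_Icc.2 ht.1) (right_mem_Icc.2 ht.1)
    have hgt : g t = U ξc 0 t (ι f) := by simp [hg, hUid ηc t]
    have hg0 : g 0 = U ηc 0 t (ι f) := by simp [hg, hUid ξc 0]
    rw [hgt, hg0] at hmv
    calc ‖U ξc 0 t (ι f) - U ηc 0 t (ι f)‖
        ≤ c₃ * (c₁ * S) * (c₂ * ‖f‖) * ‖t - 0‖ := hmv
      _ = c₃ * (c₁ * S) * (c₂ * ‖f‖) * t := by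
          rw [sub_zero, Real.norm_of_nonneg ht.1]
      _ ≤ c₃ * (c₁ * S) * (c₂ * ‖f‖) * T := by
          have h0 : 0 ≤ c₃ * (c₁ * S) * (c₂ * ‖f‖) := by positivity
          exact mul_le_mul_of_nonneg_left ht.2 h0
  -- conclude
  apply ciSup_le
  rintro ⟨t, ht⟩
  have hμK : ‖μ‖ ≤ K := hMbdd μ hμ
  have heq : embDual ι (ξc t) - embDual ι (ηc t)
      = (ξc t - ηc t).comp ι := by
    ext f; simp [embDual]
  rw [heq]
  apply ContinuousLinearMap.opNorm_le_bound
  · positivity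
  intro f
  have hval : ((ξc t - ηc t).comp ι) f
      = μ (U ξc 0 t (ι f) - U ηc 0 t (ι f)) + (μ - η) (U ηc 0 t (ι f)) := by
    rw [hξsol t ht, hηsol t ht]
    simp only [ContinuousLinearMap.comp_apply, ContinuousLinearMap.sub_apply, map_sub]
    ring
  rw [hval]
  have h1 : ‖μ (U ξc 0 t (ι f) - U ηc 0 t (ι f))‖
      ≤ K * (c₃ * (c₁ * S) * (c₂ * ‖f‖) * T) := by
    calc ‖μ (U ξc 0 t (ι f) - U ηc 0 t (ι f))‖
        ≤ ‖μ‖ * ‖U ξc 0 t (ι f) - U ηc 0 t (ι f)‖ := μ.le_opNorm _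
      _ ≤ K * (c₃ * (c₁ * S) * (c₂ * ‖f‖) * T) := by
          apply mul_le_mul hμK (key t ht f) (norm_nonneg _) hK.le
  have h2 : ‖(μ - η) (U ηc 0 t (ι f))‖ ≤ c₂ * ‖embDual ι (μ - η)‖ * ‖f‖ := by
    have : (μ - η) (U ηc 0 t (ι f)) = (embDual ι (μ - η)) (UD ηc 0 t f) := by
      simp [embDual, hUDcompat ηc 0 t f]
    rw [this]
    calc ‖(embDual ι (μ - η)) (UD ηc 0 t f)‖
        ≤ ‖embDual ι (μ - η)‖ * ‖UD ηc 0 t f‖ := (embDual ι (μ - η)).le_opNorm _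
      _ ≤ ‖embDual ι (μ - η)‖ * (c₂ * ‖f‖) := by
          gcongr
          calc ‖UD ηc 0 t f‖ ≤ ‖UD ηc 0 t‖ * ‖f‖ := (UD ηc 0 t).le_opNorm f
            _ ≤ c₂ * ‖f‖ := by gcongr; exact hUDbdd ηc hηadm 0 t le_rfl ht.1 ht.2
      _ = c₂ * ‖embDual ι (μ - η)‖ * ‖f‖ := by ring
  calc ‖μ (U ξc 0 t (ι f) - U ηc 0 t (ι f)) + (μ - η) (U ηc 0 t (ι f))‖
      ≤ ‖μ (U ξc 0 t (ι f) - U ηc 0 t (ι f))‖ + ‖(μ - η) (U ηc 0 t (ι f))‖ :=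
        norm_add_le _ _
    _ ≤ K * (c₃ * (c₁ * S) * (c₂ * ‖f‖) * T) + c₂ * ‖embDual ι (μ - η)‖ * ‖f‖ :=
        add_le_add h1 h2
    _ = (c₁ * c₂ * c₃ * T * K * S + c₂ * ‖embDual ι (μ - η)‖) * ‖f‖ := by ring
end
end
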